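/- arXiv:2202.00905 — 10 statements merged into one kernel-verified Lean document; each statement's English description precedes it below -/
import Mathlib

section
/- Let p : {1,...,C} → ℝ be a probability distribution with p(c) > 0 for all c, and let q_i : {1,...,C} → ℝ≥0 for i ∈ {1,...,I} satisfy ∑_c q_i(c) ≤ 1 for each i, and ∏_{i=1}^I q_i(c) = p(c)^I for every c. Then q_i(c) = p(c) for all i and c; in particular ∑_c q_i(c) = 1 for all i. -/
open Finset Real

theorem holder_color_distribution_lemma (C I : ℕ) (hI : 0 < I)
    (p : Fin C → ℝ) (hp_pos : ∀ c, 0 < p c) (hp_sum : ∑ c, p c = 1)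
    (q : Fin I → Fin C → ℝ) (hq_nonneg : ∀ i c, 0 ≤ q i c)
    (hq_sum : ∀ i, ∑ c, q i c ≤ 1)
    (hq_prod : ∀ c, ∏ i, q i c = p c ^ I) :
    (∀ i c, q i c = p c) ∧ (∀ i, ∑ c, q i c = 1) := by
  have hIpos : (0:ℝ) < I := by exact_mod_cast hI
  -- each q i c is positive
  have hqpos : ∀ i c, 0 < q i c := by
    intro i c
    rcases (hq_nonneg i c).lt_or_eq with h | h
    · exact h
    · exfalso
      have : ∏ j, q j c = 0 := Finset.prod_eq_zero (Finset.mem_univ i) h.symm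
      rw [hq_prod c] at this
      exact (pow_pos (hp_pos c) I).ne' this
  set w : Fin I → ℝ := fun _ => (I:ℝ)⁻¹ with hw
  have hwpos : ∀ i ∈ Finset.univ (α := Fin I), 0 < w i := fun i _ => inv_pos.2 hIpos
  have hwsum : ∑ i : Fin I, w i = 1 := by
    simp [hw, Finset.sum_const, Finset.card_univ]
    field_simp
  -- key: log p c = (1/I) ∑ log q i c
  have hlog : ∀ c, ∑ i, w i • Real.log (q i c) = Real.log (p c) := by
    intro c
    have hlp : ∑ i, Real.log (q i c) = Real.log (∏ i, q i c) :=
      (Real.log_prod (fun i _ => (hqpos i c).ne')).symm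
    simp only [smul_eq_mul, hw, ← Finset.mul_sum]
    rw [hlp, hq_prod c, Real.log_pow]
    field_simp
  -- AM-GM: p c ≤ (1/I) ∑ q i c
  have hAMGM : ∀ c, p c ≤ ∑ i, w i * q i c := by
    intro c
    have hmem : ∀ i ∈ Finset.univ (α := Fin I), q i c ∈ Set.Ioi (0:ℝ) :=
      fun i _ => hqpos i c
    have := strictConcaveOn_log_Ioi.concaveOn.le_map_sum
      (fun i _ => (hwpos i (Finset.mem_univ i)).le) hwsum hmem
    rw [hlog c] at this
    have hsumpos : 0 < ∑ i, w i • q i c := by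
      apply Finset.sum_pos (fun i _ => mul_pos (inv_pos.2 hIpos) (hqpos i c))
      exact Finset.univ_nonempty_iff.2 ⟨⟨0, hI⟩⟩
    have := Real.exp_le_exp.2 this
    rwa [Real.exp_log (hp_pos c), Real.exp_log hsumpos] at this
  -- sum over c forces equality
  have hchain : ∑ c, ∑ i, w i * q i c ≤ 1 := by
    rw [Finset.sum_comm]
    calc ∑ i, ∑ c, w i * q i c = ∑ i : Fin I, w i * ∑ c, q i c := by
          simp [Finset.mul_sum]
      _ ≤ ∑ i : Fin I, w i * 1 := by
          apply Finset.sum_le_sum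
          intro i _
          exact mul_le_mul_of_nonneg_left (hq_sum i) (hwpos i (Finset.mem_univ i)).le
      _ = 1 := by simpa using hwsum
  have heqsum : ∑ c, ∑ i, w i * q i c = 1 := le_antisymm hchain (hp_sum ▸ Finset.sum_le_sum (fun c _ => hAMGM c))
  -- pointwise equality: p c = (1/I) ∑ q i c
  have heq : ∀ c, p c = ∑ i, w i * q i c := by
    intro c
    by_contra h
    have hlt : p c < ∑ i, w i * q i c := lt_of_le_of_ne (hAMGM c) h
    have : (1:ℝ) < 1 := by
      calc (1:ℝ) = ∑ c, p c := hp_sum.symm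
        _ < ∑ c, ∑ i, w i * q i c :=
            Finset.sum_lt_sum (fun c _ => hAMGM c) ⟨c, Finset.mem_univ c, hlt⟩
        _ = 1 := heqsum
    exact lt_irrefl _ this
  -- Jensen equality case: all q i c equal
  have hqeq : ∀ i c, q i c = p c := by
    intro i c
    have hmem : ∀ j ∈ Finset.univ (α := Fin I), q j c ∈ Set.Ioi (0:ℝ) :=
      fun j _ => hqpos j c
    have hle : Real.log (∑ j, w j • q j c) ≤ ∑ j, w j • Real.log (q j c) := by
      rw [hlog c]
      simp only [smul_eq_mul, ← heq c]
      exact le_refl _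
    have hall := strictConcaveOn_log_Ioi.eq_of_map_sum_eq hwpos hwsum hmem hle
    -- all q j c equal to q i c; product gives (q i c)^I = p c ^ I
    have hprod : q i c ^ I = p c ^ I := by
      rw [← hq_prod c]
      rw [Finset.prod_congr rfl (fun j _ => hall (Finset.mem_univ j) (Finset.mem_univ i))]
      simp
    exact (pow_left_inj₀ (hq_nonneg i c) (hp_pos c).le hI.ne').mp hprod
  refine ⟨hqeq, fun i => ?_⟩
  have : ∑ c, q i c = ∑ c, p c := Finset.sum_congr rfl (fun c _ => hqeq i c)
  rw [this, hp_sum]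
end

section
/- Let n ≥ 3 be odd. There is no family of real numbers x_S, for S ∈ {0,1,...,n}, satisfying simultaneously: (a) ∑_{S=0}^{n-1} C(n-1, S) x_{S+r} = 0 for r = 0 and r = 1; (b) x_S ≤ (-1)^S for all S > n/2; and (c) x_S ≥ -(-1)^S for all S < n/2. -/
lemma alt_partial_choose (M k : ℕ) :
    ∑ i ∈ Finset.range (k+1), (-1:ℝ)^i * ((M+1).choose i : ℝ) = (-1)^k * (M.choose k : ℝ) := by
  induction k with
  | zero => simp
  | succ k ih =>
    rw [Finset.sum_range_succ, ih, Nat.choose_succ_succ]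
    push_cast
    ring

noncomputable def wfun (j : ℕ) (a nn : ℝ) : ℕ → ℝ
  | 0 => a
  | (k+1) => a * ((2*j+2).choose (k+1) : ℝ) - nn * ((2*j+2).choose k : ℝ)

@[simp] lemma wfun_zero (j : ℕ) (a nn : ℝ) : wfun j a nn 0 = a := rfl
@[simp] lemma wfun_succ (j : ℕ) (a nn : ℝ) (k : ℕ) :
    wfun j a nn (k+1) = a * ((2*j+2).choose (k+1) : ℝ) - nn * ((2*j+2).choose k : ℝ) := rfl

theorem ring_odd_infeasible (n : ℕ) (hn : 3 ≤ n) (hodd : Odd n) :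
    ¬ ∃ x : ℕ → ℝ,
      (∀ r : ℕ, r ≤ 1 →
        ∑ S ∈ Finset.range n, ((n - 1).choose S : ℝ) * x (S + r) = 0) ∧
      (∀ S : ℕ, S ≤ n → n < 2 * S → x S ≤ (-1 : ℝ) ^ S) ∧
      (∀ S : ℕ, 2 * S < n → -(-1 : ℝ) ^ S ≤ x S) := by
  rintro ⟨x, heq, hub, hlb⟩
  obtain ⟨m, rfl⟩ := hodd
  obtain ⟨j, rfl⟩ : ∃ j, m = j + 1 := ⟨m - 1, by omega⟩
  have hub' : ∀ S : ℕ, S ≤ 2*j+3 → j + 2 ≤ S → x S ≤ (-1:ℝ)^S := by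
    intro S h1 h2; exact hub S (by omega) (by omega)
  have hlb' : ∀ S : ℕ, S ≤ j + 1 → -(-1:ℝ)^S ≤ x S := by
    intro S h1; exact hlb S (by omega)
  have h0 := heq 0 (by norm_num)
  have h1 := heq 1 (by norm_num)
  rw [show 2*(j+1)+1 = 2*j+3 by ring] at h0 h1
  rw [show 2*j+3-1 = 2*j+2 by omega] at h0 h1
  simp only [add_zero] at h0
  set e : ℝ := (-1)^j with he_def
  set nn : ℝ := ((2*j+3 : ℕ) : ℝ) with hnn_def
  set a : ℝ := nn + e with ha_def
  set w : ℕ → ℝ := wfun j a nn with hw_def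
  have hee : e = 1 ∨ e = -1 := by
    rcases Nat.even_or_odd j with h | h
    · left; rw [he_def, h.neg_one_pow]
    · right; rw [he_def, h.neg_one_pow]
  have hnnval : nn = 2*(j:ℝ)+3 := by rw [hnn_def]; push_cast; ring
  have hnn3 : (3:ℝ) ≤ nn := by
    rw [hnnval]; linarith [Nat.cast_nonneg (α := ℝ) j]
  -- shifted version of h0
  have h0' : ∑ S ∈ Finset.range (2*j+3), ((2*j+2).choose (S+1) : ℝ) * x (S+1) = - x 0 := by
    have hext : ∑ S ∈ Finset.range (2*j+4), ((2*j+2).choose S : ℝ) * x S = 0 := by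
      rw [show 2*j+4 = (2*j+3)+1 by ring, Finset.sum_range_succ,
        Nat.choose_eq_zero_of_lt (by omega)]
      simpa using h0
    rw [show 2*j+4 = (2*j+3)+1 by ring, Finset.sum_range_succ'] at hext
    simp only [Nat.choose_zero_right, Nat.cast_one, one_mul] at hext
    linarith
  have hzero : ∑ S ∈ Finset.range (2*j+4), w S * x S = 0 := by
    rw [show 2*j+4 = (2*j+3)+1 by ring, Finset.sum_range_succ']
    have expand : ∀ S ∈ Finset.range (2*j+3), w (S+1) * x (S+1)
        = a * (((2*j+2).choose (S+1) : ℝ) * x (S+1)) - nn * (((2*j+2).choose S : ℝ) * x (S+1)) := by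
      intro S _; simp only [hw_def, wfun_succ]; ring
    rw [Finset.sum_congr rfl expand, Finset.sum_sub_distrib, ← Finset.mul_sum, ← Finset.mul_sum,
      h1, h0']
    simp only [hw_def, wfun_zero]
    ring
  -- the ratio identity
  have hrecR : ∀ k : ℕ, k ≤ 2*j+2 →
      ((2*j+2).choose (k+1) : ℝ) * ((k:ℝ)+1) = ((2*j+2).choose k : ℝ) * (2*(j:ℝ)+2 - (k:ℝ)) := by
    intro k hk
    have h := Nat.choose_succ_right_eq (2*j+2) k
    have h2 := congrArg (Nat.cast : ℕ → ℝ) h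
    push_cast [Nat.cast_sub hk] at h2
    linarith [h2]
  have hwpos : ∀ S : ℕ, S ≤ j+1 → 0 < w S := by
    intro S hS
    cases S with
    | zero =>
      simp only [hw_def, wfun_zero, ha_def]
      rcases hee with h | h <;> rw [h] <;> linarith
    | succ k =>
      have hk : k ≤ j := by omega
      have hC1 : (1:ℝ) ≤ ((2*j+2).choose k : ℝ) := by
        exact_mod_cast Nat.choose_pos (show k ≤ 2*j+2 by omega)
      have hR := hrecR k (by omega)
      have hkr : (k:ℝ) ≤ (j:ℝ) := by exact_mod_cast hk
      have hj0 : (0:ℝ) ≤ (j:ℝ) := Nat.cast_nonneg j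
      have hbr : 0 < a * (2*(j:ℝ)+2-(k:ℝ)) - nn * ((k:ℝ)+1) := by
        rw [ha_def, hnnval]; rcases hee with h | h <;> rw [h] <;> nlinarith
      have hkey : ((k:ℝ)+1) * w (k+1)
          = ((2*j+2).choose k : ℝ) * (a * (2*(j:ℝ)+2-(k:ℝ)) - nn * ((k:ℝ)+1)) := by
        simp only [hw_def, wfun_succ]
        linear_combination a * hR
      have hCpos : (0:ℝ) < ((2*j+2).choose k : ℝ) := by linarith
      have hpos : 0 < ((k:ℝ)+1) * w (k+1) := by
        rw [hkey]; exact mul_pos hCpos hbr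
      by_contra hge
      push_neg at hge
      have := mul_nonpos_of_nonneg_of_nonpos (show (0:ℝ) ≤ (k:ℝ)+1 by positivity) hge
      linarith
  have hwneg : ∀ S : ℕ, j+2 ≤ S → S ≤ 2*j+3 → w S < 0 := by
    intro S h1 h2
    obtain ⟨k, rfl⟩ : ∃ k, S = k+1 := ⟨S-1, by omega⟩
    rcases eq_or_lt_of_le (show k ≤ 2*j+2 by omega) with heq2 | hlt
    · subst heq2
      simp only [hw_def, wfun_succ]
      rw [Nat.choose_eq_zero_of_lt (by omega), Nat.choose_self]
      push_cast
      linarith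
    · have hk1 : j+1 ≤ k := by omega
      have hk2 : k ≤ 2*j+1 := by omega
      have hC1 : (1:ℝ) ≤ ((2*j+2).choose k : ℝ) := by
        exact_mod_cast Nat.choose_pos (show k ≤ 2*j+2 by omega)
      have hR := hrecR k (by omega)
      have hkr : (j:ℝ)+1 ≤ (k:ℝ) := by exact_mod_cast hk1
      have hkr2 : (k:ℝ) ≤ 2*(j:ℝ)+1 := by exact_mod_cast hk2
      have hj0 : (0:ℝ) ≤ (j:ℝ) := Nat.cast_nonneg j
      have hbr : a * (2*(j:ℝ)+2-(k:ℝ)) - nn * ((k:ℝ)+1) < 0 := by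
        rw [ha_def, hnnval]; rcases hee with h | h <;> rw [h] <;> nlinarith
      have hkey : ((k:ℝ)+1) * w (k+1)
          = ((2*j+2).choose k : ℝ) * (a * (2*(j:ℝ)+2-(k:ℝ)) - nn * ((k:ℝ)+1)) := by
        simp only [hw_def, wfun_succ]
        linear_combination a * hR
      have hCpos : (0:ℝ) < ((2*j+2).choose k : ℝ) := by linarith
      have hneg : ((k:ℝ)+1) * w (k+1) < 0 := by
        rw [hkey]; exact mul_neg_of_pos_of_neg hCpos hbr
      by_contra hge
      push_neg at hge
      have := mul_nonneg (show (0:ℝ) ≤ (k:ℝ)+1 by positivity) hge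
      linarith
  -- per-term bound
  have hterm : ∀ S ∈ Finset.range (2*j+4), (-1:ℝ)^(S+1) * |w S| ≤ w S * x S := by
    intro S hS
    rw [Finset.mem_range] at hS
    rcases le_or_gt S (j+1) with h | h
    · have hw := hwpos S h
      have hx := hlb' S h
      rw [abs_of_pos hw]
      calc (-1:ℝ)^(S+1) * w S = w S * (-(-1:ℝ)^S) := by ring
        _ ≤ w S * x S := mul_le_mul_of_nonneg_left hx hw.le
    · have hw := hwneg S (by omega) (by omega)
      have hx := hub' S (by omega) (by omega)
      rw [abs_of_neg hw]
      calc (-1:ℝ)^(S+1) * (-w S) = w S * ((-1:ℝ)^S) := by ring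
        _ ≤ w S * x S := mul_le_mul_of_nonpos_left hx hw.le
  -- full alternating sum
  have expandF : ∀ S : ℕ, (-1:ℝ)^(S+1) * w (S+1)
      = a * ((-1:ℝ)^(S+1) * ((2*j+2).choose (S+1):ℝ)) + nn * ((-1:ℝ)^S * ((2*j+2).choose S:ℝ)) := by
    intro S; simp only [hw_def, wfun_succ]; ring
  have hSgfull : ∑ S ∈ Finset.range (2*j+4), (-1:ℝ)^S * ((2*j+2).choose S : ℝ) = 0 := by
    have h4 := alt_partial_choose (2*j+1) (2*j+3)
    rw [show 2*j+1+1 = 2*j+2 by ring, show 2*j+3+1 = 2*j+4 by ring] at h4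
    rw [h4, Nat.choose_eq_zero_of_lt (by omega)]; simp
  have hF : ∑ S ∈ Finset.range (2*j+4), (-1:ℝ)^S * w S = 0 := by
    rw [show 2*j+4 = (2*j+3)+1 by ring, Finset.sum_range_succ']
    rw [Finset.sum_congr rfl (fun S _ => expandF S), Finset.sum_add_distrib,
      ← Finset.mul_sum, ← Finset.mul_sum]
    have hSg2 : ∑ S ∈ Finset.range (2*j+3), (-1:ℝ)^S * ((2*j+2).choose S:ℝ) = 0 := by
      have h3 := alt_partial_choose (2*j+1) (2*j+2)
      rw [show 2*j+1+1 = 2*j+2 by ring, show 2*j+2+1 = 2*j+3 by ring] at h3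
      rw [h3, Nat.choose_eq_zero_of_lt (by omega)]; simp
    have hSg1 : ∑ S ∈ Finset.range (2*j+3), (-1:ℝ)^(S+1) * ((2*j+2).choose (S+1):ℝ) = -1 := by
      rw [show 2*j+4 = (2*j+3)+1 by ring, Finset.sum_range_succ'] at hSgfull
      simp only [Nat.choose_zero_right, Nat.cast_one, mul_one, pow_zero, one_mul] at hSgfull
      linarith
    rw [hSg1, hSg2]
    simp only [hw_def, wfun_zero]
    ring
  -- partial alternating sum
  have hG : ∑ S ∈ Finset.range (j+2), (-1:ℝ)^S * w S = -((2*j+1).choose (j+1) : ℝ) := by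
    rw [show j+2 = (j+1)+1 by ring, Finset.sum_range_succ']
    rw [Finset.sum_congr rfl (fun S _ => expandF S), Finset.sum_add_distrib,
      ← Finset.mul_sum, ← Finset.mul_sum]
    have hSg2 : ∑ S ∈ Finset.range (j+1), (-1:ℝ)^S * ((2*j+2).choose S:ℝ)
        = (-1:ℝ)^j * ((2*j+1).choose j : ℝ) := by
      have h3 := alt_partial_choose (2*j+1) j
      rw [show 2*j+1+1 = 2*j+2 by ring] at h3
      exact h3
    have hSg1 : ∑ S ∈ Finset.range (j+1), (-1:ℝ)^(S+1) * ((2*j+2).choose (S+1):ℝ)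
        = (-1:ℝ)^(j+1) * ((2*j+1).choose (j+1) : ℝ) - 1 := by
      have h3 := alt_partial_choose (2*j+1) (j+1)
      rw [show 2*j+1+1 = 2*j+2 by ring, show j+1+1 = (j+1)+1 by ring,
        Finset.sum_range_succ'] at h3
      simp only [Nat.choose_zero_right, Nat.cast_one, mul_one, pow_zero, one_mul] at h3
      linarith
    rw [hSg1, hSg2]
    simp only [hw_def, wfun_zero]
    have hsymm : ((2*j+1).choose j : ℝ) = ((2*j+1).choose (j+1) : ℝ) := by
      norm_cast
      rw [← Nat.choose_symm (show j+1 ≤ 2*j+1 by omega), show 2*j+1-(j+1) = j by omega]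
    rw [hsymm]
    have he2 : e * e = 1 := by rcases hee with h | h <;> rw [h] <;> norm_num
    have hpj : (-1:ℝ)^(j+1) = -e := by rw [he_def, pow_succ]; ring
    rw [hpj, ha_def]
    linear_combination (-(((2*j+1).choose (j+1) : ℕ) : ℝ)) * he2
  -- total lower bound value
  have hT : ∑ S ∈ Finset.range (2*j+4), (-1:ℝ)^(S+1) * |w S| = 2*((2*j+1).choose (j+1):ℝ) := by
    have hdecomp : ∀ S ∈ Finset.range (2*j+4), (-1:ℝ)^(S+1) * |w S|
        = (-1:ℝ)^S * w S + (if S ≤ j+1 then (-2)*((-1:ℝ)^S * w S) else 0) := by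
      intro S hS
      rw [Finset.mem_range] at hS
      rcases le_or_gt S (j+1) with h | h
      · rw [if_pos h, abs_of_pos (hwpos S h)]; ring
      · rw [if_neg (by omega), abs_of_neg (hwneg S (by omega) (by omega))]; ring
    rw [Finset.sum_congr rfl hdecomp, Finset.sum_add_distrib, hF]
    have hsub : Finset.range (j+2) ⊆ Finset.range (2*j+4) := Finset.range_subset_range.mpr (by omega)
    rw [← Finset.sum_subset hsub (fun S _ hnS => by
      rw [if_neg]; rw [Finset.mem_range] at hnS; omega)]
    rw [Finset.sum_congr rfl (fun S hS => if_pos (by rw [Finset.mem_range] at hS; omega)),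
      ← Finset.mul_sum, hG]
    ring
  have hle := Finset.sum_le_sum hterm
  rw [hzero, hT] at hle
  have hCpos : (0:ℝ) < ((2*j+1).choose (j+1) : ℝ) := by
    exact_mod_cast Nat.choose_pos (show j+1 ≤ 2*j+1 by omega)
  linarith
end

section
/- Let n = 4k with k ≥ 1. There is no family of real numbers x_S, S ∈ {0,...,n}, satisfying: (a) ∑_{S=0}^{n-1} C(n-1, S) x_{S+r} = 0 for r = 0, 1; (b) x_S ≤ (-1)^S for S > n/2; (c) x_S ≥ -(-1)^S for S < n/2. -/
open Finset

/-- partial alternating sum of binomial coefficients -/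
lemma altsum_choose (m : ℕ) : ∀ N, ∑ T ∈ Finset.range (N+1), (-1:ℝ)^T * ((m+1).choose T : ℝ)
    = (-1)^N * (m.choose N : ℝ) := by
  intro N
  induction N with
  | zero => simp
  | succ N ih =>
    rw [Finset.sum_range_succ, ih, Nat.choose_succ_succ]
    push_cast
    ring

/-- strict unimodality just below the middle -/
lemma choose_middle_lt (j : ℕ) : (4*j+2).choose (2*j) < (4*j+2).choose (2*j+1) := by
  have e := Nat.choose_succ_right_eq (4*j+2) (2*j)
  have h : 4*j+2 - 2*j = 2*j+2 := by omega
  rw [h] at e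
  have p : 0 < (4*j+2).choose (2*j) := Nat.choose_pos (by omega)
  nlinarith [e, p]

theorem ring_4k_infeasible (k n : ℕ) (hk : 1 ≤ k) (hn : n = 4 * k) :
    ¬ ∃ x : ℕ → ℝ,
      (∀ r : ℕ, r ≤ 1 →
        ∑ S ∈ Finset.range n, ((n - 1).choose S : ℝ) * x (S + r) = 0) ∧
      (∀ S : ℕ, S ≤ n → n < 2 * S → x S ≤ (-1 : ℝ) ^ S) ∧
      (∀ S : ℕ, 2 * S < n → -(-1 : ℝ) ^ S ≤ x S) := by
  rintro ⟨x, hsum, hub, hlb⟩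
  obtain ⟨j, rfl⟩ : ∃ j, k = j + 1 := ⟨k - 1, by omega⟩
  have hn4 : n = 4*j+4 := by omega
  subst hn4
  have hm' : 4*j+4 - 1 = 4*j+3 := by omega
  have h0 := hsum 0 (by norm_num)
  have h1 := hsum 1 (by norm_num)
  rw [hm'] at h0 h1
  simp only [add_zero] at h0
  set m : ℕ := 4*j+3 with hmdef
  set c : ℕ → ℝ := fun T => (m.choose T : ℝ) - (if T = 0 then 0 else (m.choose (T-1) : ℝ))
    with hcdef
  set W : ℕ → ℝ := fun N => ∑ T ∈ Finset.range N, (-1:ℝ)^T * (m.choose T : ℝ) with hWdef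
  -- closed form for W
  have hW : ∀ N, W (N+1) = (-1)^N * ((4*j+2).choose N : ℝ) := fun N => altsum_choose (4*j+2) N
  -- alternating sums of c
  have hcW : ∀ N, ∑ T ∈ Finset.range (N+1), (-1:ℝ)^T * c T = W (N+1) + W N := by
    intro N
    have h2 : ∑ T ∈ Finset.range (N+1),
        (-1:ℝ)^T * (if T = 0 then 0 else (m.choose (T-1) : ℝ)) = -W N := by
      rw [Finset.sum_range_succ']
      simp only [Nat.add_sub_cancel, if_pos rfl, Nat.succ_ne_zero, if_neg, mul_zero, add_zero,
        reduceIte]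
      rw [hWdef, ← Finset.sum_neg_distrib]
      exact Finset.sum_congr rfl fun T _ => by ring
    simp only [hcdef, mul_sub, Finset.sum_sub_distrib, h2]
    rw [hWdef]
    ring
  -- the combined equation: ∑_{T ≤ 4j+4} c T * x T = 0
  have hAB : ∑ T ∈ Finset.range (4*j+5), c T * x T = 0 := by
    have e1 : ∑ T ∈ Finset.range (4*j+5), (m.choose T : ℝ) * x T
        = ∑ S ∈ Finset.range (4*j+4), (m.choose S : ℝ) * x S := by
      rw [show 4*j+5 = (4*j+4)+1 from rfl, Finset.sum_range_succ,
        Nat.choose_eq_zero_of_lt (by omega : m < 4*j+4)]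
      simp
    have e2 : ∑ T ∈ Finset.range (4*j+5),
        (if T = 0 then (0:ℝ) else (m.choose (T-1) : ℝ)) * x T
        = ∑ S ∈ Finset.range (4*j+4), (m.choose S : ℝ) * x (S+1) := by
      rw [show 4*j+5 = (4*j+4)+1 from rfl, Finset.sum_range_succ']
      simp
    calc ∑ T ∈ Finset.range (4*j+5), c T * x T
        = ∑ T ∈ Finset.range (4*j+5), ((m.choose T : ℝ) * x T
            - (if T = 0 then (0:ℝ) else (m.choose (T-1) : ℝ)) * x T) :=
          Finset.sum_congr rfl fun T _ => by rw [hcdef]; ring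
      _ = 0 := by rw [Finset.sum_sub_distrib, e1, e2, h0, h1]; ring
  -- sign facts about c
  have hc_nonneg : ∀ T, T < 2*j+2 → 0 ≤ c T := by
    intro T hT
    match T with
    | 0 => simp [hcdef]
    | (T'+1) =>
      have hle : m.choose T' ≤ m.choose (T'+1) :=
        Nat.choose_le_succ_of_lt_half_left (by omega : T' < m / 2)
      simp only [hcdef, Nat.succ_ne_zero, if_neg, Nat.add_sub_cancel, reduceIte]
      have : (m.choose T' : ℝ) ≤ (m.choose (T'+1) : ℝ) := by exact_mod_cast hle
      linarith
  have hc_mid : c (2*j+2) = 0 := by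
    have hs : m.choose (2*j+2) = m.choose (2*j+1) := by
      have := Nat.choose_symm_half (2*j+1)
      simpa [hmdef, show 2*(2*j+1)+1 = 4*j+3 from by ring] using this
    simp only [hcdef, Nat.succ_ne_zero, if_neg, Nat.add_sub_cancel, reduceIte]
    rw [show 2*j+2-1 = 2*j+1 from by omega, hs]
    ring
  have hc_nonpos : ∀ T, 2*j+2 < T → T ≤ 4*j+4 → c T ≤ 0 := by
    intro T hT1 hT2
    match T with
    | (T'+1) =>
      have key : m.choose (T'+1) ≤ m.choose T' := by
        rcases le_or_gt (T'+1) m with hle | hgt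
        · have s1 : m.choose (T'+1) = m.choose (m - (T'+1)) := (Nat.choose_symm hle).symm
          have s2 : m.choose T' = m.choose (m - T') := (Nat.choose_symm (by omega)).symm
          have s3 : m - T' = (m - (T'+1)) + 1 := by omega
          have h4 : m - (T'+1) < m / 2 := by omega
          rw [s1, s2, s3]
          exact Nat.choose_le_succ_of_lt_half_left h4
        · rw [Nat.choose_eq_zero_of_lt hgt]
          exact Nat.zero_le _
      simp only [hcdef, Nat.succ_ne_zero, if_neg, Nat.add_sub_cancel, reduceIte]
      have : (m.choose (T'+1) : ℝ) ≤ (m.choose T' : ℝ) := by exact_mod_cast key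
      linarith
  -- split the sum and bound each part
  rw [Finset.range_eq_Ico,
    ← Finset.sum_Ico_consecutive (fun T => c T * x T) (Nat.zero_le (2*j+2))
      (by omega : 2*j+2 ≤ 4*j+5),
    Finset.sum_eq_sum_Ico_succ_bot (by omega : 2*j+2 < 4*j+5)] at hAB
  have hA1 : ∑ T ∈ Finset.Ico 0 (2*j+2), (-1:ℝ)^(T+1) * c T
      ≤ ∑ T ∈ Finset.Ico 0 (2*j+2), c T * x T := by
    apply Finset.sum_le_sum
    intro T hT
    rw [Finset.mem_Ico] at hT
    have hx : -(-1:ℝ)^T ≤ x T := hlb T (by omega)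
    have hc0 := hc_nonneg T hT.2
    have := mul_le_mul_of_nonneg_left hx hc0
    calc (-1:ℝ)^(T+1) * c T = c T * (-(-1:ℝ)^T) := by ring
      _ ≤ c T * x T := this
  have hA2 : ∑ T ∈ Finset.Ico (2*j+2+1) (4*j+5), (-1:ℝ)^T * c T
      ≤ ∑ T ∈ Finset.Ico (2*j+2+1) (4*j+5), c T * x T := by
    apply Finset.sum_le_sum
    intro T hT
    rw [Finset.mem_Ico] at hT
    have hx : x T ≤ (-1:ℝ)^T := hub T (by omega) (by omega)
    have hc0 := hc_nonpos T (by omega) (by omega)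
    have := mul_le_mul_of_nonpos_left hx hc0
    calc (-1:ℝ)^T * c T = c T * ((-1:ℝ)^T) := by ring
      _ ≤ c T * x T := this
  -- compute the two lower-bound sums
  have hS1 : ∑ T ∈ Finset.Ico 0 (2*j+2), (-1:ℝ)^(T+1) * c T
      = -(W (2*j+2) + W (2*j+1)) := by
    have : ∑ T ∈ Finset.Ico 0 (2*j+2), (-1:ℝ)^(T+1) * c T
        = -∑ T ∈ Finset.Ico 0 (2*j+2), (-1:ℝ)^T * c T := by
      rw [← Finset.sum_neg_distrib]
      exact Finset.sum_congr rfl fun T _ => by ring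
    rw [this, ← Finset.range_eq_Ico, show 2*j+2 = (2*j+1)+1 from rfl, hcW]
  have hS2 : ∑ T ∈ Finset.Ico (2*j+2+1) (4*j+5), (-1:ℝ)^T * c T
      = (W (4*j+5) + W (4*j+4)) - (W (2*j+3) + W (2*j+2)) := by
    rw [Finset.sum_Ico_eq_sub _ (by omega : 2*j+3 ≤ 4*j+5),
      show 4*j+5 = (4*j+4)+1 from rfl, show 2*j+3 = (2*j+2)+1 from rfl, hcW, hcW]
  -- evaluate the Ws
  have hW1 : W (2*j+2) = -((4*j+2).choose (2*j+1) : ℝ) := by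
    rw [show 2*j+2 = (2*j+1)+1 from rfl, hW, Odd.neg_one_pow ⟨j, by ring⟩]; ring
  have hW2 : W (2*j+1) = ((4*j+2).choose (2*j) : ℝ) := by
    rw [show 2*j+1 = (2*j)+1 from rfl, hW, Even.neg_one_pow ⟨j, by ring⟩]; ring
  have hW3 : W (2*j+3) = ((4*j+2).choose (2*j+2) : ℝ) := by
    rw [show 2*j+3 = (2*j+2)+1 from rfl, hW, Even.neg_one_pow ⟨j+1, by ring⟩]; ring
  have hW4 : W (4*j+5) = 0 := by
    rw [show 4*j+5 = (4*j+4)+1 from rfl, hW, Nat.choose_eq_zero_of_lt (by omega)]; simp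
  have hW5 : W (4*j+4) = 0 := by
    rw [show 4*j+4 = (4*j+3)+1 from rfl, hW, Nat.choose_eq_zero_of_lt (by omega)]; simp
  have hsym : (4*j+2).choose (2*j+2) = (4*j+2).choose (2*j) := by
    rw [← Nat.choose_symm (by omega : 2*j+2 ≤ 4*j+2)]
    congr 1
    omega
  have hlt : ((4*j+2).choose (2*j) : ℝ) < ((4*j+2).choose (2*j+1) : ℝ) := by
    exact_mod_cast choose_middle_lt j
  have hmid : c (2*j+2) * x (2*j+2) = 0 := by rw [hc_mid]; ring
  have hsym' : ((4*j+2).choose (2*j+2) : ℝ) = ((4*j+2).choose (2*j) : ℝ) := by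
    exact_mod_cast hsym
  rw [hS1] at hA1
  rw [hS2] at hA2
  rw [hmid] at hAB
  rw [hW1, hW2] at hA1
  rw [hW3, hW1, hW4, hW5] at hA2
  rw [hsym'] at hA2
  linarith
end

section
/- Let n ≥ 3 be odd and suppose C > 0 satisfies C·C(n-1,S) ≥ C(n-1,S-1) for all S < n/2 and C·C(n-1,S) ≤ C(n-1,S-1) for all S > n/2. If real numbers x_S (S ∈ {0,...,n}) satisfy ∑_{S=0}^{n} (C·C(n-1,S) - C(n-1,S-1)) x_S = 0, together with x_S ≤ (-1)^S for S > n/2 and x_S ≥ -(-1)^S for S < n/2, then 0 ≥ (C-1)·(-1)^{(n+1)/2}·C(n-1,(n-1)/2). -/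
open Finset

private lemma partial_alt (N : ℕ) : ∀ k : ℕ,
    ∑ S ∈ Finset.range (k+1), (-1:ℝ)^S * ((N+1).choose S : ℝ)
      = (-1:ℝ)^k * ((N).choose k : ℝ) := by
  intro k
  induction k with
  | zero => simp
  | succ k ih =>
    rw [Finset.sum_range_succ, ih, Nat.choose_succ_succ]
    push_cast
    ring

noncomputable def fAux (k S : ℕ) : ℝ := if S ≤ k+1 then -(-1:ℝ)^S else (-1:ℝ)^S

noncomputable def aAux (C : ℝ) (k S : ℕ) : ℝ :=
  C * ((2*k+2).choose S : ℝ) - (if S = 0 then 0 else ((2*k+2).choose (S-1) : ℝ))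

private lemma hf (k S : ℕ) :
    fAux k (S+1) = (if S = k+1 then -2*(-1:ℝ)^(k+1) else 0) - fAux k S := by
  rcases lt_trichotomy S (k+1) with h|h|h
  · have h1 : S ≤ k+1 := le_of_lt h
    have h2 : S+1 ≤ k+1 := h
    simp only [fAux, if_pos h1, if_pos h2, if_neg (Nat.ne_of_lt h), pow_succ]
    ring
  · subst h
    simp [fAux, pow_succ]
    ring
  · have h1 : ¬ S ≤ k+1 := not_le.mpr h
    have h2 : ¬ S+1 ≤ k+1 := by omega
    simp only [fAux, if_neg h1, if_neg h2, if_neg (by omega : ¬ S = k+1), pow_succ]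
    ring

private lemma keyAux (C : ℝ) (k : ℕ) :
    ∑ S ∈ Finset.range (2*k+4), aAux C k S * fAux k S
      = (C-1) * (-1:ℝ)^(k+2) * ((2*k+2).choose (k+1) : ℝ) := by
  have e1 : ∑ S ∈ Finset.range (2*k+4), (C * ((2*k+2).choose S : ℝ)) * fAux k S
      = ∑ S ∈ Finset.range (2*k+3), (C * ((2*k+2).choose S : ℝ)) * fAux k S := by
    rw [show 2*k+4 = (2*k+3)+1 from by omega, Finset.sum_range_succ,
      Nat.choose_eq_zero_of_lt (by omega : 2*k+2 < 2*k+3)]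
    simp
  have e2 : ∑ S ∈ Finset.range (2*k+4),
        (if S = 0 then (0:ℝ) else ((2*k+2).choose (S-1) : ℝ)) * fAux k S
      = ∑ S ∈ Finset.range (2*k+3), ((2*k+2).choose S : ℝ) * fAux k (S+1) := by
    rw [show 2*k+4 = (2*k+3)+1 from by omega, Finset.sum_range_succ']
    simp
  have e0 : ∑ S ∈ Finset.range (2*k+4), aAux C k S * fAux k S
      = ∑ S ∈ Finset.range (2*k+3),
          (C * ((2*k+2).choose S : ℝ) * fAux k S - ((2*k+2).choose S : ℝ) * fAux k (S+1)) := by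
    simp only [aAux, sub_mul]
    rw [Finset.sum_sub_distrib, e1, e2, ← Finset.sum_sub_distrib]
  have step : ∀ S, C * ((2*k+2).choose S : ℝ) * fAux k S - ((2*k+2).choose S : ℝ) * fAux k (S+1)
      = (C+1) * (((2*k+2).choose S : ℝ) * fAux k S)
        + (if S = k+1 then 2*(-1:ℝ)^(k+1) * ((2*k+2).choose S : ℝ) else 0) := by
    intro S
    rw [hf k S]
    by_cases h : S = k+1 <;> simp [h] <;> ring
  have hA : ∑ S ∈ Finset.range (2*k+3), ((2*k+2).choose S : ℝ) * fAux k S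
      = -2 * (-1:ℝ)^(k+1) * ((2*k+1).choose (k+1) : ℝ) := by
    have hsplit : ∑ S ∈ Finset.range (2*k+3), ((2*k+2).choose S : ℝ) * fAux k S
        = ∑ S ∈ Finset.range (2*k+3), (-1:ℝ)^S * ((2*k+2).choose S : ℝ)
          - ∑ S ∈ Finset.range (2*k+3),
              (if S ≤ k+1 then 2*((-1:ℝ)^S * ((2*k+2).choose S : ℝ)) else 0) := by
      rw [← Finset.sum_sub_distrib]
      apply Finset.sum_congr rfl
      intro S _
      by_cases h : S ≤ k+1 <;> simp [fAux, h] <;> ring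
    have h1 : ∑ S ∈ Finset.range (2*k+3), (-1:ℝ)^S * ((2*k+2).choose S : ℝ) = 0 := by
      have := partial_alt (2*k+1) (2*k+2)
      rw [show (2*k+1)+1 = 2*k+2 from by omega] at this
      rw [show 2*k+3 = (2*k+2)+1 from by omega, this,
        Nat.choose_eq_zero_of_lt (by omega : 2*k+1 < 2*k+2)]
      simp
    have h2 : ∑ S ∈ Finset.range (2*k+3),
          (if S ≤ k+1 then 2*((-1:ℝ)^S * ((2*k+2).choose S : ℝ)) else 0)
        = 2 * ((-1:ℝ)^(k+1) * ((2*k+1).choose (k+1) : ℝ)) := by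
      rw [← Finset.sum_subset (Finset.range_subset_range.mpr (by omega : k+2 ≤ 2*k+3))
        (by intro x _ hx; rw [if_neg]; simp at hx; omega)]
      rw [Finset.sum_congr rfl (fun S hS => if_pos (by simp at hS; omega)),
        ← Finset.mul_sum]
      have := partial_alt (2*k+1) (k+1)
      rw [show (2*k+1)+1 = 2*k+2 from by omega] at this
      rw [show k+2 = (k+1)+1 from rfl, this]
    rw [hsplit, h1, h2]
    ring
  have hmid : ((2*k+2).choose (k+1) : ℝ) = 2 * ((2*k+1).choose (k+1) : ℝ) := by
    have h1 : (2*k+2).choose (k+1) = (2*k+1).choose k + (2*k+1).choose (k+1) := by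
      rw [show 2*k+2 = (2*k+1)+1 from by omega]
      exact Nat.choose_succ_succ _ _
    have h2 : (2*k+1).choose k = (2*k+1).choose (k+1) := by
      have := Nat.choose_symm (show k+1 ≤ 2*k+1 by omega)
      rw [show 2*k+1-(k+1) = k from by omega] at this
      exact this
    rw [h1, h2]
    push_cast
    ring
  rw [e0, Finset.sum_congr rfl (fun S _ => step S), Finset.sum_add_distrib,
    ← Finset.mul_sum, hA, Finset.sum_ite_eq' (Finset.range (2*k+3)) (k+1),
    if_pos (Finset.mem_range.mpr (by omega : k+1 < 2*k+3)), hmid]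
  ring

theorem odd_ring_telescoping_bound (n : ℕ) (hn : 3 ≤ n) (hodd : Odd n)
    (C : ℝ) (hC : 0 < C)
    (hC1 : ∀ S : ℕ, 2 * S < n →
      (if S = 0 then 0 else ((n - 1).choose (S - 1) : ℝ))
        ≤ C * ((n - 1).choose S : ℝ))
    (hC2 : ∀ S : ℕ, n < 2 * S → S ≤ n →
      C * ((n - 1).choose S : ℝ)
        ≤ (if S = 0 then 0 else ((n - 1).choose (S - 1) : ℝ)))
    (x : ℕ → ℝ)
    (hsum : ∑ S ∈ Finset.range (n + 1),
      (C * ((n - 1).choose S : ℝ)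
        - (if S = 0 then 0 else ((n - 1).choose (S - 1) : ℝ))) * x S = 0)
    (hupper : ∀ S : ℕ, n < 2 * S → S ≤ n → x S ≤ (-1 : ℝ) ^ S)
    (hlower : ∀ S : ℕ, 2 * S < n → -(-1 : ℝ) ^ S ≤ x S) :
    (C - 1) * (-1 : ℝ) ^ ((n + 1) / 2) * ((n - 1).choose ((n - 1) / 2) : ℝ) ≤ 0 := by
  obtain ⟨k, rfl⟩ : ∃ k, n = 2*k+3 := ⟨(n-3)/2, by obtain ⟨t, ht⟩ := hodd; omega⟩
  have hsub : 2*k+3-1 = 2*k+2 := by omega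
  rw [hsub] at hC1 hC2 hsum
  rw [hsub, show (2*k+3+1)/2 = k+2 from by omega, show (2*k+2)/2 = k+1 from by omega,
    ← keyAux C k]
  have hle : ∑ S ∈ Finset.range (2*k+4), aAux C k S * fAux k S
      ≤ ∑ S ∈ Finset.range (2*k+4), aAux C k S * x S := by
    apply Finset.sum_le_sum
    intro S hS
    have hSn : S < 2*k+4 := Finset.mem_range.mp hS
    by_cases h : S ≤ k+1
    · have ha : 0 ≤ aAux C k S := sub_nonneg.mpr (hC1 S (by omega))
      have hx : -(-1:ℝ)^S ≤ x S := hlower S (by omega)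
      have hfS : fAux k S = -(-1:ℝ)^S := if_pos h
      rw [hfS]
      exact mul_le_mul_of_nonneg_left hx ha
    · have ha : aAux C k S ≤ 0 := sub_nonpos.mpr (hC2 S (by omega) (by omega))
      have hx : x S ≤ (-1:ℝ)^S := hupper S (by omega) (by omega)
      have hfS : fAux k S = (-1:ℝ)^S := if_neg h
      rw [hfS]
      exact mul_le_mul_of_nonpos_left hx ha
  have hsum' : ∑ S ∈ Finset.range (2*k+4), aAux C k S * x S = 0 := by
    rw [show 2*k+4 = 2*k+3+1 from by omega]
    exact hsum
  linarith [hle, hsum']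
end

section
/- Finner's inequality for bipartite networks: Let S_1,...,S_I be independent random variables, and for each j ∈ {1,...,J} let g_j be a bounded measurable function depending only on the variables {S_i : i → j} according to a bipartite incidence relation. Suppose there exist weights 0 < x_j < 1 with ∑_{j: i → j} x_j = 1 for every i. Then E[∏_j |g_j|] ≤ ∏_j (E[|g_j|^{1/x_j}])^{x_j}. -/
open MeasureTheory
open scoped ENNReal

/-- Integrating out variables a function does not depend on (w.r.t. probability
measures) does not change it. -/
theorem finner_lmarginal_of_independent {δ : Type*} [DecidableEq δ] {π : δ → Type*}
    [∀ i, MeasurableSpace (π i)] (μ : ∀ i, Measure (π i)) [∀ i, IsProbabilityMeasure (μ i)]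
    (s : Finset δ) (f : (∀ i, π i) → ℝ≥0∞) (hf : Measurable f)
    (hind : ∀ i ∈ s, ∀ (y : ∀ i, π i) (z : π i), f (Function.update y i z) = f y) :
    ∀ y, (∫⋯∫⁻_s, f ∂μ) y = f y := by
  classical
  induction s using Finset.induction with
  | empty => simp
  | @insert i s hi ih =>
    intro y
    rw [lmarginal_insert _ hf hi]
    have h1 : ∀ z : π i, (∫⋯∫⁻_s, f ∂μ) (Function.update y i z) = f y := by
      intro z
      rw [ih (fun i' hi' => hind i' (Finset.mem_insert_of_mem hi')),
        hind i (Finset.mem_insert_self i s)]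
    simp_rw [h1]
    simp

/-- The key induction for Finner's inequality, phrased with marginals of
`ℝ≥0∞`-valued functions. -/
theorem finner_key {I J : ℕ} {Ωi : Fin I → Type*} [∀ i, MeasurableSpace (Ωi i)]
    (μ : ∀ i, Measure (Ωi i)) [∀ i, IsProbabilityMeasure (μ i)]
    (E : Fin I → Fin J → Prop) [∀ i, DecidablePred (E i)]
    (x : Fin J → ℝ) (hx : ∀ j, 0 ≤ x j)
    (hPFIS : ∀ i, ∑ j ∈ Finset.univ.filter (fun j => E i j), x j = 1)
    (F : Fin J → (∀ i, Ωi i) → ℝ≥0∞) (hF : ∀ j, Measurable (F j))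
    (hind : ∀ j i, ¬ E i j → ∀ (y : ∀ i, Ωi i) (z : Ωi i),
      F j (Function.update y i z) = F j y) :
    ∀ (s : Finset (Fin I)) (y : ∀ i, Ωi i),
      (∫⋯∫⁻_s, (fun a => ∏ j, F j a ^ x j) ∂μ) y
        ≤ ∏ j, ((∫⋯∫⁻_(s.filter (fun i => E i j)), F j ∂μ) y) ^ x j := by
  classical
  have hΦ : Measurable (fun a => ∏ j, F j a ^ x j) :=
    Finset.measurable_prod _ fun j _ => (hF j).pow_const _
  intro s
  induction s using Finset.induction with
  | empty => intro y; simp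
  | @insert i s hi ih =>
    intro y
    rw [lmarginal_insert _ hΦ hi]
    have step1 : ∫⁻ z, (∫⋯∫⁻_s, (fun a => ∏ j, F j a ^ x j) ∂μ) (Function.update y i z) ∂μ i
        ≤ ∫⁻ z, ∏ j, ((∫⋯∫⁻_(s.filter (fun i' => E i' j)), F j ∂μ)
            (Function.update y i z)) ^ x j ∂μ i :=
      lintegral_mono fun z => ih (Function.update y i z)
    refine step1.trans ?_
    -- split the product over `j` according to whether `E i j`
    set B : Finset (Fin J) := Finset.univ.filter (fun j => E i j) with hB
    have hif : ∀ j, i ∉ s.filter (fun i' => E i' j) := by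
      intro j h
      exact hi (Finset.mem_of_mem_filter i h)
    -- constants for j ∉ B
    have hconst : ∀ j, ¬ E i j → ∀ z,
        (∫⋯∫⁻_(s.filter (fun i' => E i' j)), F j ∂μ) (Function.update y i z)
          = (∫⋯∫⁻_(s.filter (fun i' => E i' j)), F j ∂μ) y := by
      intro j hj z
      rw [lmarginal_update_of_notMem (hF j) (hif j)]
      congr 1
      ext a
      exact hind j i hj a z
    have hsplit : ∀ z, ∏ j, ((∫⋯∫⁻_(s.filter (fun i' => E i' j)), F j ∂μ)
          (Function.update y i z)) ^ x j
        = (∏ j ∈ B, ((∫⋯∫⁻_(s.filter (fun i' => E i' j)), F j ∂μ)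
            (Function.update y i z)) ^ x j)
          * ∏ j ∈ Finset.univ.filter (fun j => ¬ E i j),
              ((∫⋯∫⁻_(s.filter (fun i' => E i' j)), F j ∂μ) y) ^ x j := by
      intro z
      rw [← Finset.prod_filter_mul_prod_filter_not Finset.univ (fun j => E i j)]
      congr 1
      refine Finset.prod_congr rfl fun j hj => ?_
      rw [hconst j (by simpa using (Finset.mem_filter.mp hj).2) z]
    simp_rw [hsplit]
    have hmeasB : ∀ j ∈ B, AEMeasurable
        (fun z => (∫⋯∫⁻_(s.filter (fun i' => E i' j)), F j ∂μ) (Function.update y i z))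
        (μ i) :=
      fun j _ => ((Measurable.lmarginal μ (hF j)).comp (measurable_update y)).aemeasurable
    rw [lintegral_mul_const'' _ (by
      exact (Finset.aemeasurable_fun_prod _ fun j hj => ((hmeasB j hj).pow_const _)))]
    have holder : ∫⁻ z, ∏ j ∈ B, ((∫⋯∫⁻_(s.filter (fun i' => E i' j)), F j ∂μ)
          (Function.update y i z)) ^ x j ∂μ i
        ≤ ∏ j ∈ B, (∫⁻ z, (∫⋯∫⁻_(s.filter (fun i' => E i' j)), F j ∂μ)
            (Function.update y i z) ∂μ i) ^ x j :=
      ENNReal.lintegral_prod_norm_pow_le B hmeasB (hPFIS i) (fun j _ => hx j)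
    refine le_trans (mul_le_mul_left holder _) (le_of_eq ?_)
    -- rewrite each factor in terms of the filter over `insert i s`
    have hfilter_mem : ∀ j, E i j →
        (insert i s).filter (fun i' => E i' j) = insert i (s.filter (fun i' => E i' j)) := by
      intro j hj
      rw [Finset.filter_insert, if_pos hj]
    have hfilter_not : ∀ j, ¬ E i j →
        (insert i s).filter (fun i' => E i' j) = s.filter (fun i' => E i' j) := by
      intro j hj
      rw [Finset.filter_insert, if_neg hj]
    have hBfac : ∀ j ∈ B, (∫⁻ z, (∫⋯∫⁻_(s.filter (fun i' => E i' j)), F j ∂μ)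
          (Function.update y i z) ∂μ i)
        = (∫⋯∫⁻_((insert i s).filter (fun i' => E i' j)), F j ∂μ) y := by
      intro j hj
      have hEij : E i j := by simpa [hB] using (Finset.mem_filter.mp hj).2
      rw [hfilter_mem j hEij, lmarginal_insert _ (hF j) (hif j)]
    rw [← Finset.prod_filter_mul_prod_filter_not Finset.univ (fun j => E i j)
      (fun j => ((∫⋯∫⁻_((insert i s).filter (fun i' => E i' j)), F j ∂μ) y) ^ x j)]
    congr 1
    · refine Finset.prod_congr rfl fun j hj => ?_
      rw [hBfac j hj]
    · refine Finset.prod_congr rfl fun j hj => ?_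
      rw [hfilter_not j (by simpa using (Finset.mem_filter.mp hj).2)]

theorem finner_inequality
    {I J : ℕ} (Ωi : Fin I → Type*) [∀ i, MeasurableSpace (Ωi i)]
    (μ : ∀ i, Measure (Ωi i)) [∀ i, IsProbabilityMeasure (μ i)]
    (E : Fin I → Fin J → Prop) [∀ i, DecidablePred (E i)]
    (x : Fin J → ℝ) (hx : ∀ j, 0 < x j ∧ x j < 1)
    (hPFIS : ∀ i, ∑ j ∈ Finset.univ.filter (fun j => E i j), x j = 1)
    (g : Fin J → (∀ i, Ωi i) → ℝ)
    (hmeas : ∀ j, Measurable (g j))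
    (hbdd : ∀ j, ∃ M : ℝ, ∀ a, |g j a| ≤ M)
    (hdep : ∀ j, ∀ a b : ∀ i, Ωi i, (∀ i, E i j → a i = b i) → g j a = g j b) :
    ∫ a, ∏ j, |g j a| ∂(Measure.pi μ)
      ≤ ∏ j, (∫ a, |g j a| ^ (1 / x j) ∂(Measure.pi μ)) ^ (x j) := by
  classical
  have hne : ∀ i, Nonempty (Ωi i) := by
    intro i
    have h1 : (μ i) Set.univ ≠ 0 := by simp
    exact Set.nonempty_iff_univ_nonempty.mpr
      (MeasureTheory.nonempty_of_measure_ne_zero h1)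
  have hy : Nonempty (∀ i, Ωi i) := ⟨fun i => (hne i).some⟩
  obtain ⟨y₀⟩ := hy
  set F : Fin J → (∀ i, Ωi i) → ℝ≥0∞ :=
    fun j a => (ENNReal.ofReal |g j a|) ^ (1 / x j) with hFdef
  have hF : ∀ j, Measurable (F j) :=
    fun j => ((hmeas j).abs.ennreal_ofReal).pow_const _
  have hind : ∀ j i, ¬ E i j → ∀ (y : ∀ i, Ωi i) (z : Ωi i),
      F j (Function.update y i z) = F j y := by
    intro j i hij y z
    have : g j (Function.update y i z) = g j y := by
      apply hdep
      intro i' hi'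
      have : i' ≠ i := by rintro rfl; exact hij hi'
      exact Function.update_of_ne this _ _
    simp [hFdef, this]
  -- the pointwise identity  ∏ j, F j a ^ x j = ofReal (∏ j, |g j a|)
  have hpt : ∀ a, (∏ j, F j a ^ x j) = ENNReal.ofReal (∏ j, |g j a|) := by
    intro a
    rw [ENNReal.ofReal_prod_of_nonneg (fun j _ => abs_nonneg _)]
    refine Finset.prod_congr rfl fun j _ => ?_
    simp only [hFdef]
    rw [← ENNReal.rpow_mul, one_div, inv_mul_cancel₀ (ne_of_gt (hx j).1), ENNReal.rpow_one]
  -- key inequality with s = univ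
  have key := finner_key μ E x (fun j => le_of_lt (hx j).1) hPFIS F hF hind Finset.univ y₀
  rw [lmarginal_univ] at key
  -- identify the RHS marginals with full integrals
  have hful : ∀ j, (∫⋯∫⁻_(Finset.univ.filter (fun i => E i j)), F j ∂μ) y₀
      = ∫⁻ a, F j a ∂(Measure.pi μ) := by
    intro j
    set t : Finset (Fin I) := Finset.univ.filter (fun i => E i j) with ht
    have hsub : t ⊆ Finset.univ := Finset.subset_univ t
    have hunion : (Finset.univ \ t) ∪ t = Finset.univ := Finset.sdiff_union_of_subset hsub
    have h1 : ∫⁻ a, F j a ∂(Measure.pi μ) = (∫⋯∫⁻_Finset.univ, F j ∂μ) y₀ :=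
      lintegral_eq_lmarginal_univ y₀
    rw [h1, ← hunion, lmarginal_union μ (F j) (hF j) Finset.sdiff_disjoint]
    refine (finner_lmarginal_of_independent μ _ _ (Measurable.lmarginal μ (hF j)) ?_ y₀).symm
    intro i hi y z
    have hEij : ¬ E i j := by
      intro h
      exact (Finset.mem_sdiff.mp hi).2 (by simp [ht, h])
    rw [lmarginal_update_of_notMem (hF j) (by
      intro h; exact (Finset.mem_sdiff.mp hi).2 h) y z]
    congr 1
    ext a
    exact hind j i hEij a z
  simp_rw [hful] at key
  simp_rw [hpt] at key
  -- finiteness of each ∫⁻ F j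
  have hfin : ∀ j, ∫⁻ a, F j a ∂(Measure.pi μ) ≠ ⊤ := by
    intro j
    obtain ⟨M, hM⟩ := hbdd j
    have hxj : (0:ℝ) ≤ 1 / x j := one_div_nonneg.mpr (hx j).1.le
    have hle : ∀ a, F j a ≤ ENNReal.ofReal M ^ (1 / x j) := by
      intro a
      exact ENNReal.rpow_le_rpow (ENNReal.ofReal_le_ofReal (hM a)) hxj
    have : ∫⁻ a, F j a ∂(Measure.pi μ) ≤ ENNReal.ofReal M ^ (1 / x j) := by
      calc ∫⁻ a, F j a ∂(Measure.pi μ)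
          ≤ ∫⁻ _, ENNReal.ofReal M ^ (1 / x j) ∂(Measure.pi μ) := lintegral_mono hle
        _ = ENNReal.ofReal M ^ (1 / x j) := by simp
    exact ne_top_of_le_ne_top
      (ENNReal.rpow_ne_top_of_nonneg hxj ENNReal.ofReal_ne_top) this
  have hRHSne : (∏ j, (∫⁻ a, F j a ∂(Measure.pi μ)) ^ x j) ≠ ⊤ := by
    refine (ENNReal.prod_lt_top ?_).ne
    intro j _
    exact (ENNReal.rpow_ne_top_of_nonneg (hx j).1.le (hfin j)).lt_top
  -- convert Bochner integrals to lintegrals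
  have habs_meas : Measurable fun a => ∏ j, |g j a| :=
    Finset.measurable_prod _ fun j _ => (hmeas j).abs
  have hLHS : ∫ a, ∏ j, |g j a| ∂(Measure.pi μ)
      = (∫⁻ a, ENNReal.ofReal (∏ j, |g j a|) ∂(Measure.pi μ)).toReal :=
    integral_eq_lintegral_of_nonneg_ae
      (Filter.Eventually.of_forall fun a => Finset.prod_nonneg fun j _ => abs_nonneg _)
      habs_meas.aestronglyMeasurable
  have hRHSj : ∀ j, ∫ a, |g j a| ^ (1 / x j) ∂(Measure.pi μ)
      = (∫⁻ a, F j a ∂(Measure.pi μ)).toReal := by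
    intro j
    rw [integral_eq_lintegral_of_nonneg_ae
      (Filter.Eventually.of_forall fun a => Real.rpow_nonneg (abs_nonneg _) _)
      ((hmeas j).abs.pow_const (1 / x j)).aestronglyMeasurable]
    congr 1
    refine lintegral_congr fun a => ?_
    simp only [hFdef]
    exact (ENNReal.ofReal_rpow_of_nonneg (abs_nonneg _) (one_div_nonneg.mpr (hx j).1.le)).symm
  rw [hLHS]
  calc (∫⁻ a, ENNReal.ofReal (∏ j, |g j a|) ∂(Measure.pi μ)).toReal
      ≤ (∏ j, (∫⁻ a, F j a ∂(Measure.pi μ)) ^ x j).toReal :=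
        ENNReal.toReal_mono hRHSne key
    _ = ∏ j, ((∫⁻ a, F j a ∂(Measure.pi μ)).toReal) ^ x j := by
        rw [ENNReal.toReal_prod]
        exact Finset.prod_congr rfl fun j _ => (ENNReal.toReal_rpow _ _).symm
    _ = ∏ j, (∫ a, |g j a| ^ (1 / x j) ∂(Measure.pi μ)) ^ x j := by
        exact Finset.prod_congr rfl fun j _ => by rw [hRHSj j]
end

section
/- Rigidity of token counting (conservation step): Let N be a bipartite network of sources S_1,...,S_I and parties A_1,...,A_J such that no two distinct parties share more than one common source (NDCS). Suppose each party's output n_j is a function of the received source values {s_i : i→j}, and the total ∑_j n_j({s_i}) is constant over all source values. Fix reference values r_i for each source and define R_i^j({s_{i'} : i'→j}) = n_j({s_{i'}}) - n_j({ŝ_{i'}^i}) where ŝ_{i'}^i replaces s_i by r_i. Then each R_i^j depends only on s_i, i.e., R_i^j({s_{i'} : i'→j}) = R_i^j(s_i). -/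
theorem TC_conservation_step
    {I J : ℕ} (S : Fin I → Type*)
    (E : Fin I → Fin J → Prop)
    (hNDCS : ¬ ∃ (i i' : Fin I) (j j' : Fin J),
      i ≠ i' ∧ j ≠ j' ∧ E i j ∧ E i j' ∧ E i' j ∧ E i' j')
    (n : Fin J → (∀ i, S i) → ℤ)
    (hdep : ∀ j, ∀ s s' : ∀ i, S i, (∀ i, E i j → s i = s' i) → n j s = n j s')
    (N : ℤ) (hconst : ∀ s : ∀ i, S i, ∑ j, n j s = N)
    (r : ∀ i, S i) :
    ∀ (i : Fin I) (j : Fin J), E i j →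
      ∀ s s' : ∀ i, S i, s i = s' i →
        n j s - n j (Function.update s i (r i))
          = n j s' - n j (Function.update s' i (r i)) := by
  classical
  push_neg at hNDCS
  intro i j hEij s s' hss'
  -- Single-coordinate change lemma
  have step : ∀ (t : ∀ i, S i) (a : Fin I) (v : S a), a ≠ i →
      n j t - n j (Function.update t i (r i))
        = n j (Function.update t a v)
            - n j (Function.update (Function.update t a v) i (r i)) := by
    intro t a v hai
    set t₂ := Function.update t a v with ht₂
    by_cases hEa : E a j
    · -- use conservation
      have key : ∀ j' : Fin J, j' ≠ j →
          n j' t - n j' (Function.update t i (r i))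
            = n j' t₂ - n j' (Function.update t₂ i (r i)) := by
        intro j' hj'
        by_cases hEij' : E i j'
        · have hnEa : ¬ E a j' := hNDCS i a j j' hai.symm hj'.symm hEij hEij' hEa
          have e1 : n j' t₂ = n j' t := by
            apply hdep
            intro k hk
            exact Function.update_of_ne (by rintro rfl; exact hnEa hk) _ _
          have e2 : n j' (Function.update t₂ i (r i))
              = n j' (Function.update t i (r i)) := by
            apply hdep
            intro k hk
            by_cases hki : k = i
            · subst hki; simp
            · rw [Function.update_of_ne hki, Function.update_of_ne hki]
              exact Function.update_of_ne (by rintro rfl; exact hnEa hk) _ _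
          rw [e1, e2]
        · have e1 : n j' (Function.update t i (r i)) = n j' t := by
            apply hdep
            intro k hk
            exact Function.update_of_ne (by rintro rfl; exact hEij' hk) _ _
          have e2 : n j' (Function.update t₂ i (r i)) = n j' t₂ := by
            apply hdep
            intro k hk
            exact Function.update_of_ne (by rintro rfl; exact hEij' hk) _ _
          rw [e1, e2]; ring
      have h1 : ∑ j', (n j' t - n j' (Function.update t i (r i))) = 0 := by
        rw [Finset.sum_sub_distrib, hconst, hconst]; ring
      have h2 : ∑ j', (n j' t₂ - n j' (Function.update t₂ i (r i))) = 0 := by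
        rw [Finset.sum_sub_distrib, hconst, hconst]; ring
      have e1 := Finset.sum_erase_add Finset.univ
        (fun j' => n j' t - n j' (Function.update t i (r i))) (Finset.mem_univ j)
      have e2 := Finset.sum_erase_add Finset.univ
        (fun j' => n j' t₂ - n j' (Function.update t₂ i (r i))) (Finset.mem_univ j)
      have e3 : ∑ j' ∈ Finset.univ.erase j,
            (n j' t - n j' (Function.update t i (r i)))
          = ∑ j' ∈ Finset.univ.erase j,
            (n j' t₂ - n j' (Function.update t₂ i (r i))) :=
        Finset.sum_congr rfl fun x hx => key x (Finset.ne_of_mem_erase hx)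
      rw [h1] at e1
      rw [h2] at e2
      rw [e3] at e1
      beta_reduce at e1 e2
      linarith
    · -- a not connected to j : n j unaffected
      have e1 : n j t₂ = n j t := by
        apply hdep
        intro k hk
        exact Function.update_of_ne (by rintro rfl; exact hEa hk) _ _
      have e2 : n j (Function.update t₂ i (r i))
          = n j (Function.update t i (r i)) := by
        apply hdep
        intro k hk
        by_cases hki : k = i
        · subst hki; simp
        · rw [Function.update_of_ne hki, Function.update_of_ne hki]
          exact Function.update_of_ne (by rintro rfl; exact hEa hk) _ _
      rw [e1, e2]
  -- Induction: change coordinates of t to s' one at a time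
  have main : ∀ (A : Finset (Fin I)) (t : ∀ i, S i), t i = s i →
      (∀ k, k ∉ A → t k = s' k) →
      n j t - n j (Function.update t i (r i))
        = n j s' - n j (Function.update s' i (r i)) := by
    intro A
    induction A using Finset.induction_on with
    | empty =>
      intro t hti htk
      have : t = s' := funext fun k => htk k (Finset.notMem_empty k)
      rw [this]
    | insert a A ha ih =>
      intro t hti htk
      by_cases hai : a = i
      · subst hai
        refine ih t hti ?_
        intro k hk
        by_cases hka : k = a
        · subst hka; rw [hti, hss']
        · exact htk k (by simp [hka, hk])
      · have h1 := step t a (s' a) hai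
        rw [h1]
        refine ih (Function.update t a (s' a)) ?_ ?_
        · rw [Function.update_of_ne (Ne.symm hai)]; exact hti
        · intro k hk
          by_cases hka : k = a
          · subst hka; simp
          · rw [Function.update_of_ne hka]
            exact htk k (by simp [hka, hk])
  exact main Finset.univ s rfl (fun k hk => absurd (Finset.mem_univ k) hk)
end

section
/- Rigidity of token counting (decomposition): Under the hypotheses of the conservation step (NDCS network, ∑_j n_j constant), for every j one has n_j({s_i : i→j}) = ∑_{i: i→j} R_i^j(s_i) + n_j({r_i : i→j}), where R_i^j(s_i) is the single-variable difference function. -/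
theorem TC_decomposition_step
    {I J : ℕ} (S : Fin I → Type*)
    (E : Fin I → Fin J → Prop) [∀ i j, Decidable (E i j)]
    (hNDCS : ¬ ∃ (i i' : Fin I) (j j' : Fin J),
      i ≠ i' ∧ j ≠ j' ∧ E i j ∧ E i j' ∧ E i' j ∧ E i' j')
    (n : Fin J → (∀ i, S i) → ℤ)
    (hdep : ∀ j, ∀ s s' : ∀ i, S i, (∀ i, E i j → s i = s' i) → n j s = n j s')
    (N : ℤ) (hconst : ∀ s : ∀ i, S i, ∑ j, n j s = N)
    (r : ∀ i, S i) :
    ∀ (j : Fin J) (s : ∀ i, S i),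
      n j s = (∑ i ∈ Finset.univ.filter (fun i => E i j),
          (n j (Function.update r i (s i)) - n j r)) + n j r := by
  classical
  -- step lemma: changing a coordinate i' ≠ i does not change the difference
  have step : ∀ (j : Fin J) (i i' : Fin I), E i j → i' ≠ i →
      ∀ (a : S i) (b : S i') (c : ∀ i, S i),
      n j (Function.update (Function.update c i' b) i a)
        - n j (Function.update (Function.update c i' b) i (r i))
      = n j (Function.update c i a) - n j (Function.update c i (r i)) := by
    intro j i i' hij hne a b c
    by_cases hE : E i' j
    · -- use conservation
      have key : ∀ x, n j x = N - ∑ j' ∈ Finset.univ.erase j, n j' x := by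
        intro x
        have h := hconst x
        rw [← Finset.add_sum_erase _ _ (Finset.mem_univ j)] at h
        linarith
      set u := Function.update c i' b with hu
      have term : ∀ j' ∈ Finset.univ.erase j,
          n j' (Function.update u i a) - n j' (Function.update u i (r i))
          = n j' (Function.update c i a) - n j' (Function.update c i (r i)) := by
        intro j' hj'
        have hjj : j' ≠ j := Finset.ne_of_mem_erase hj'
        by_cases hij' : E i j'
        · have hE' : ¬ E i' j' := by
            intro h
            exact hNDCS ⟨i, i', j', j, fun he => hne he.symm, hjj, hij', hij, h, hE⟩
          have h1 : ∀ (v : S i), n j' (Function.update u i v) = n j' (Function.update c i v) := by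
            intro v
            apply hdep
            intro k hk
            by_cases hki : k = i
            · subst hki; simp
            · rw [Function.update_of_ne hki, Function.update_of_ne hki, hu]
              have hki' : k ≠ i' := fun h => hE' (h ▸ hk)
              rw [Function.update_of_ne hki']
          rw [h1, h1]
        · have h0 : ∀ (x : ∀ i, S i),
              n j' (Function.update x i a) = n j' (Function.update x i (r i)) := by
            intro x
            apply hdep
            intro k hk
            have hki : k ≠ i := fun h => hij' (h ▸ hk)
            rw [Function.update_of_ne hki, Function.update_of_ne hki]
          rw [h0, h0]; ring
      have hsum : ∑ j' ∈ Finset.univ.erase j,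
          (n j' (Function.update u i a) - n j' (Function.update u i (r i)))
          = ∑ j' ∈ Finset.univ.erase j,
          (n j' (Function.update c i a) - n j' (Function.update c i (r i))) :=
        Finset.sum_congr rfl term
      rw [Finset.sum_sub_distrib, Finset.sum_sub_distrib] at hsum
      rw [key (Function.update u i a), key (Function.update u i (r i)),
        key (Function.update c i a), key (Function.update c i (r i))]
      linarith
    · -- n j doesn't depend on coordinate i'
      have h1 : ∀ (v : S i),
          n j (Function.update (Function.update c i' b) i v) = n j (Function.update c i v) := by
        intro v
        apply hdep
        intro k hk
        by_cases hki : k = i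
        · subst hki; simp
        · rw [Function.update_of_ne hki, Function.update_of_ne hki]
          have hki' : k ≠ i' := fun h => hE (h ▸ hk)
          rw [Function.update_of_ne hki']
      rw [h1, h1]
  -- rigidity: the difference does not depend on the base configuration
  have rigid : ∀ (j : Fin J) (i : Fin I), E i j → ∀ (a : S i) (c : ∀ i, S i),
      n j (Function.update c i a) - n j (Function.update c i (r i))
      = n j (Function.update r i a) - n j r := by
    intro j i hij a c
    have main : ∀ T : Finset (Fin I),
        n j (Function.update (fun k => if k ∈ T then c k else r k) i a)
          - n j (Function.update (fun k => if k ∈ T then c k else r k) i (r i))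
        = n j (Function.update r i a) - n j (Function.update r i (r i)) := by
      intro T
      induction T using Finset.induction_on with
      | empty => simp
      | @insert i' T h ih =>
        have hfun : (fun k => if k ∈ insert i' T then c k else r k)
            = Function.update (fun k => if k ∈ T then c k else r k) i' (c i') := by
          funext k
          by_cases hk : k = i'
          · subst hk; simp
          · rw [Function.update_of_ne hk]
            simp [Finset.mem_insert, hk]
        rw [hfun]
        by_cases hii : i' = i
        · subst hii
          simp only [Function.update_idem]
          exact ih
        · rw [step j i i' hij hii a (c i') _, ih]
    have h1 := main Finset.univ
    simp only [Finset.mem_univ, if_true] at h1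
    rw [Function.update_eq_self] at h1
    exact h1
  intro j s
  have main : ∀ T : Finset (Fin I), T ⊆ Finset.univ.filter (fun i => E i j) →
      n j (fun i => if i ∈ T then s i else r i)
      = (∑ i ∈ T, (n j (Function.update r i (s i)) - n j r)) + n j r := by
    intro T
    induction T using Finset.induction_on with
    | empty => intro _; simp
    | @insert i₀ T h ih =>
      intro hsub
      have hE : E i₀ j := by
        have := hsub (Finset.mem_insert_self i₀ T)
        simpa using this
      have hsub' : T ⊆ Finset.univ.filter (fun i => E i j) :=
        fun k hk => hsub (Finset.mem_insert_of_mem hk)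
      have hfun : (fun k => if k ∈ insert i₀ T then s k else r k)
          = Function.update (fun k => if k ∈ T then s k else r k) i₀ (s i₀) := by
        funext k
        by_cases hk : k = i₀
        · subst hk; simp
        · rw [Function.update_of_ne hk]
          simp [Finset.mem_insert, hk]
      have hold : (fun k => if k ∈ T then s k else r k)
          = Function.update (fun k => if k ∈ T then s k else r k) i₀ (r i₀) := by
        funext k
        by_cases hk : k = i₀
        · subst hk; simp [h]
        · rw [Function.update_of_ne hk]
      have hr := rigid j i₀ hE (s i₀) (fun k => if k ∈ T then s k else r k)
      rw [← hold] at hr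
      rw [Finset.sum_insert h, hfun]
      have ihT := ih hsub'
      linarith
  have hfinal := main (Finset.univ.filter (fun i => E i j)) (le_refl _)
  have hs : n j s = n j (fun i => if i ∈ Finset.univ.filter (fun i => E i j) then s i else r i) := by
    apply hdep
    intro k hk
    simp [hk]
  rw [hs, hfinal]
end

section
/- Token counting rigidity (full statement for a classical simulation): Let N be an NDCS network. Suppose a classical strategy (independent source variables s_i ∈ S_i, deterministic output functions n_j of received values) produces a token-counting distribution in which source S_i distributes η_i tokens, i.e. the support of the outputs satisfies: ∑_j n_j = ∑_i η_i always; min over the support of n_j equals ∑_{i:i→j} ℓ_i^j where ℓ_i^j is the minimal number of tokens S_i can send to A_j; and P(n_j = 0) > 0 for each j. Then there exist functions T_i^j : S_i → ℤ_{≥0} such that (i) ∑_{j: i→j} T_i^j(s_i) = η_i for all i and all s_i, and (ii) n_j({s_i : i→j}) = ∑_{i: i→j} T_i^j(s_i). -/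
/-- A function of finitely many coordinates invariant under single-coordinate
updates is constant. -/
theorem tc_update_const {I : ℕ} {S : Fin I → Type*} {β : Sort*}
    (f : (∀ i, S i) → β)
    (h : ∀ s (i : Fin I) (v : S i), f (Function.update s i v) = f s)
    (s s' : ∀ i, S i) : f s = f s' := by
  have key : ∀ t : Finset (Fin I), f (fun i => if i ∈ t then s' i else s i) = f s := by
    intro t
    induction t using Finset.induction_on with
    | empty => simp
    | @insert a t ha ih =>
      have e : (fun i => if i ∈ insert a t then s' i else s i)
          = Function.update (fun i => if i ∈ t then s' i else s i) a (s' a) := by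
        funext i
        rcases eq_or_ne i a with rfl | hia
        · simp [ha]
        · simp [Function.update_of_ne hia, Finset.mem_insert, hia]
      rw [e, h, ih]
  have := key Finset.univ
  simpa using this.symm

theorem TC_rigidity_full
    {I J : ℕ} (S : Fin I → Type*) [∀ i, Nonempty (S i)]
    (E : Fin I → Fin J → Prop) [∀ i j, Decidable (E i j)]
    (hNDCS : ¬ ∃ (i i' : Fin I) (j j' : Fin J),
      i ≠ i' ∧ j ≠ j' ∧ E i j ∧ E i j' ∧ E i' j ∧ E i' j')
    (η : Fin I → ℕ) (ℓ : Fin I → Fin J → ℕ)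
    (n : Fin J → (∀ i, S i) → ℕ)
    -- each party's output depends only on the sources connected to it
    (hdep : ∀ j, ∀ s s' : ∀ i, S i, (∀ i, E i j → s i = s' i) → n j s = n j s')
    -- the total number of tokens is always ∑ η_i
    (hsum : ∀ s : ∀ i, S i, ∑ j, n j s = ∑ i, η i)
    -- ∑_{j:i→j} n_j ≥ η_i: the parties connected to S_i receive its η_i tokens
    (hη : ∀ i, ∀ s : ∀ i, S i,
      η i ≤ ∑ j ∈ Finset.univ.filter (fun j => E i j), n j s)
    -- the minimum of n_j over the support equals ∑_{i:i→j} ℓ_i^j,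
    -- ℓ_i^j being the minimal number of tokens S_i can send to A_j
    (hminlb : ∀ j, ∀ s : ∀ i, S i,
      ∑ i ∈ Finset.univ.filter (fun i => E i j), ℓ i j ≤ n j s)
    (hminach : ∀ j, ∃ s : ∀ i, S i,
      n j s = ∑ i ∈ Finset.univ.filter (fun i => E i j), ℓ i j)
    -- P(n_j = 0) > 0 for each j
    (hzero : ∀ j, ∃ s : ∀ i, S i, n j s = 0) :
    ∃ T : (i : Fin I) → Fin J → S i → ℕ,
      (∀ i (si : S i), ∑ j ∈ Finset.univ.filter (fun j => E i j), T i j si = η i) ∧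
      (∀ j (s : ∀ i, S i),
        n j s = ∑ i ∈ Finset.univ.filter (fun i => E i j), T i j (s i)) := by
  classical
  -- base point
  set s0 : ∀ i, S i := fun i => Classical.choice (inferInstance : Nonempty (S i)) with hs0
  -- n j is unchanged by updating a coordinate not connected to j
  have hupd : ∀ (j : Fin J) (s : ∀ i, S i) (i : Fin I) (v : S i), ¬ E i j →
      n j (Function.update s i v) = n j s := by
    intro j s i v hij
    apply hdep
    intro i' hi'
    have hne : i' ≠ i := by rintro rfl; exact hij hi'
    exact Function.update_of_ne hne _ _
  have hupd2 : ∀ (j : Fin J) (s : ∀ i, S i) (i i' : Fin I) (v : S i) (u : S i'),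
      i ≠ i' → ¬ E i' j →
      n j (Function.update (Function.update s i' u) i v) = n j (Function.update s i v) := by
    intro j s i i' v u hne hij
    apply hdep
    intro i'' hi''
    have h2 : i'' ≠ i' := by rintro rfl; exact hij hi''
    rcases eq_or_ne i'' i with rfl | h1
    · simp
    · rw [Function.update_of_ne h1, Function.update_of_ne h1, Function.update_of_ne h2]
  -- the total received by the neighbors of source i does not depend on s_i
  have Fconst : ∀ (s : ∀ i, S i) (i : Fin I) (v : S i),
      ∑ j ∈ Finset.univ.filter (fun j => E i j), n j (Function.update s i v)
      = ∑ j ∈ Finset.univ.filter (fun j => E i j), n j s := by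
    intro s i v
    have h1 : ∑ j, n j (Function.update s i v) = ∑ j, n j s := by rw [hsum, hsum]
    have h3 : ∑ j ∈ Finset.univ.filter (fun j => ¬ E i j), n j (Function.update s i v)
        = ∑ j ∈ Finset.univ.filter (fun j => ¬ E i j), n j s := by
      refine Finset.sum_congr rfl (fun j hj => ?_)
      exact hupd j s i v (Finset.mem_filter.mp hj).2
    have e1 := Finset.sum_filter_add_sum_filter_not Finset.univ (fun j => E i j)
      (fun j => n j (Function.update s i v))
    have e2 := Finset.sum_filter_add_sum_filter_not Finset.univ (fun j => E i j)
      (fun j => n j s)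
    omega
  -- increments of n j in a single coordinate do not depend on the other coordinates
  have INC : ∀ (j : Fin J) (i : Fin I), E i j → ∀ (v w : S i) (s s' : ∀ i, S i),
      (n j (Function.update s i v) : ℤ) - n j (Function.update s i w)
      = (n j (Function.update s' i v) : ℤ) - n j (Function.update s' i w) := by
    intro j i hij v w
    apply tc_update_const
      (f := fun s => (n j (Function.update s i v) : ℤ) - n j (Function.update s i w))
    intro s i' u
    rcases eq_or_ne i' i with rfl | hne
    · simp [Function.update_idem]
    by_cases hi'j : E i' j
    · -- express the increment via the other neighbors of i
      have key : ∀ (s : ∀ i, S i),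
          (n j (Function.update s i v) : ℤ) - n j (Function.update s i w)
          = -∑ j' ∈ (Finset.univ.filter (fun j' => E i j')).erase j,
              ((n j' (Function.update s i v) : ℤ) - n j' (Function.update s i w)) := by
        intro s
        have hA : ∑ j' ∈ Finset.univ.filter (fun j' => E i j'),
            ((n j' (Function.update s i v) : ℤ) - n j' (Function.update s i w)) = 0 := by
          rw [Finset.sum_sub_distrib]
          have h1 := Fconst s i v
          have h2 := Fconst s i w
          have hv : ∑ j' ∈ Finset.univ.filter (fun j' => E i j'),
              ((n j' (Function.update s i v) : ℤ))
              = ∑ j' ∈ Finset.univ.filter (fun j' => E i j'),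
              ((n j' (Function.update s i w) : ℤ)) := by
            rw [← Nat.cast_sum, ← Nat.cast_sum, h1, h2]
          rw [hv, sub_self]
        have hjm : j ∈ Finset.univ.filter (fun j' => E i j') :=
          Finset.mem_filter.mpr ⟨Finset.mem_univ _, hij⟩
        have he : ((n j (Function.update s i v) : ℤ) - n j (Function.update s i w))
            + ∑ j' ∈ (Finset.univ.filter (fun j' => E i j')).erase j,
              ((n j' (Function.update s i v) : ℤ) - n j' (Function.update s i w))
            = ∑ j' ∈ Finset.univ.filter (fun j' => E i j'),
              ((n j' (Function.update s i v) : ℤ) - n j' (Function.update s i w)) :=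
          Finset.add_sum_erase _
            (fun j' => ((n j' (Function.update s i v) : ℤ) - n j' (Function.update s i w))) hjm
        rw [hA] at he
        linarith
      rw [key, key]
      congr 1
      refine Finset.sum_congr rfl (fun j' hj' => ?_)
      obtain ⟨hjj', hj'mem⟩ := Finset.mem_erase.mp hj'
      have hEij' : E i j' := (Finset.mem_filter.mp hj'mem).2
      have hne' : ¬ E i' j' := by
        intro h
        exact hNDCS ⟨i, i', j', j, Ne.symm hne, hjj', hEij', hij, h, hi'j⟩
      rw [hupd2 j' s i i' v u (fun h => hne h.symm) hne',
        hupd2 j' s i i' w u (fun h => hne h.symm) hne']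
    · rw [hupd2 j s i i' v u (fun h => hne h.symm) hi'j,
        hupd2 j s i i' w u (fun h => hne h.symm) hi'j]
  -- single-source contribution functions (ℤ-valued, relative to base point)
  set g : (i : Fin I) → Fin J → S i → ℤ :=
    fun i j si => (n j (Function.update s0 i si) : ℤ) - n j s0 with hg
  -- separability
  have sep : ∀ (j : Fin J) (s : ∀ i, S i),
      (n j s : ℤ) = n j s0 + ∑ i ∈ Finset.univ.filter (fun i => E i j), g i j (s i) := by
    intro j s
    have hinv : ∀ (s : ∀ i, S i) (i' : Fin I) (v : S i'),
        ((n j (Function.update s i' v) : ℤ)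
          - ∑ i ∈ Finset.univ.filter (fun i => E i j), g i j (Function.update s i' v i))
        = (n j s : ℤ) - ∑ i ∈ Finset.univ.filter (fun i => E i j), g i j (s i) := by
      intro s i' v
      by_cases hE : E i' j
      · have hi'mem : i' ∈ Finset.univ.filter (fun i => E i j) :=
          Finset.mem_filter.mpr ⟨Finset.mem_univ _, hE⟩
        have hINC := INC j i' hE v (s i') s s0
        rw [Function.update_eq_self] at hINC
        have e1 : g i' j v = (n j (Function.update s0 i' v) : ℤ) - n j s0 := by rw [hg]
        have e2 : g i' j (s i') = (n j (Function.update s0 i' (s i')) : ℤ) - n j s0 := by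
          rw [hg]
        have hs1 : ∑ i ∈ Finset.univ.filter (fun i => E i j), g i j (Function.update s i' v i)
            = g i' j v + ∑ i ∈ (Finset.univ.filter (fun i => E i j)).erase i',
              g i j (Function.update s i' v i) := by
          rw [← Finset.add_sum_erase _ (fun i => g i j (Function.update s i' v i)) hi'mem]
          simp
        have hs2 : ∑ i ∈ Finset.univ.filter (fun i => E i j), g i j (s i)
            = g i' j (s i') + ∑ i ∈ (Finset.univ.filter (fun i => E i j)).erase i',
              g i j (s i) :=
          (Finset.add_sum_erase _ (fun i => g i j (s i)) hi'mem).symm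
        have hs3 : ∑ i ∈ (Finset.univ.filter (fun i => E i j)).erase i',
            g i j (Function.update s i' v i)
            = ∑ i ∈ (Finset.univ.filter (fun i => E i j)).erase i', g i j (s i) := by
          refine Finset.sum_congr rfl (fun i hi => ?_)
          rw [Function.update_of_ne (Finset.mem_erase.mp hi).1]
        rw [hs1, hs2, hs3]
        linarith
      · rw [hupd j s i' v hE]
        have hsame : ∑ i ∈ Finset.univ.filter (fun i => E i j),
            g i j (Function.update s i' v i)
            = ∑ i ∈ Finset.univ.filter (fun i => E i j), g i j (s i) := by
          refine Finset.sum_congr rfl (fun i hi => ?_)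
          have : i ≠ i' := fun h => hE (h ▸ (Finset.mem_filter.mp hi).2)
          rw [Function.update_of_ne this]
        rw [hsame]
    have hconst := tc_update_const
      (f := fun s => (n j s : ℤ) - ∑ i ∈ Finset.univ.filter (fun i => E i j), g i j (s i))
      hinv s s0
    have hzero' : ∑ i ∈ Finset.univ.filter (fun i => E i j), g i j (s0 i) = 0 := by
      refine Finset.sum_eq_zero (fun i _ => ?_)
      rw [hg]
      simp [Function.update_eq_self]
    simp only [hzero', sub_zero] at hconst
    linarith
  -- zero-achieving points
  choose sstar hsstar using hzero
  set m : Fin I → Fin J → ℤ := fun i j => g i j (sstar j i) with hm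
  have hmsum : ∀ j, (n j s0 : ℤ) + ∑ i ∈ Finset.univ.filter (fun i => E i j), m i j = 0 := by
    intro j
    have h := sep j (sstar j)
    rw [hsstar j] at h
    simp only [hm]
    push_cast at h
    linarith
  have hn_eq : ∀ (j : Fin J) (s : ∀ i, S i),
      (n j s : ℤ) = ∑ i ∈ Finset.univ.filter (fun i => E i j), (g i j (s i) - m i j) := by
    intro j s
    rw [Finset.sum_sub_distrib]
    have h1 := sep j s
    have h2 := hmsum j
    linarith
  -- nonnegativity
  have hTznn : ∀ (i : Fin I) (j : Fin J), E i j → ∀ si : S i, 0 ≤ g i j si - m i j := by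
    intro i j hij si
    have h0 : (0 : ℤ) ≤ (n j (Function.update (sstar j) i si) : ℤ) := Int.natCast_nonneg _
    have he := hn_eq j (Function.update (sstar j) i si)
    have himem : i ∈ Finset.univ.filter (fun i => E i j) :=
      Finset.mem_filter.mpr ⟨Finset.mem_univ _, hij⟩
    have hz : ∑ i' ∈ (Finset.univ.filter (fun i => E i j)).erase i,
        (g i' j (Function.update (sstar j) i si i') - m i' j) = 0 := by
      refine Finset.sum_eq_zero (fun i' hi' => ?_)
      rw [Function.update_of_ne (Finset.mem_erase.mp hi').1]
      simp only [hm]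
      exact sub_self _
    have hsplit : ∑ i' ∈ Finset.univ.filter (fun i => E i j),
        (g i' j (Function.update (sstar j) i si i') - m i' j)
        = (g i j (Function.update (sstar j) i si i) - m i j)
          + ∑ i' ∈ (Finset.univ.filter (fun i => E i j)).erase i,
            (g i' j (Function.update (sstar j) i si i') - m i' j) :=
      (Finset.add_sum_erase _
        (fun i' => g i' j (Function.update (sstar j) i si i') - m i' j) himem).symm
    rw [hsplit, hz, add_zero, Function.update_self] at he
    linarith
  -- the per-source totals are constant
  have hsumg0 : ∀ (i : Fin I) (si : S i),
      ∑ j ∈ Finset.univ.filter (fun j => E i j), g i j si = 0 := by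
    intro i si
    simp only [hg]
    rw [Finset.sum_sub_distrib, ← Nat.cast_sum, ← Nat.cast_sum, Fconst s0 i si, sub_self]
  set C : Fin I → ℤ := fun i => -∑ j ∈ Finset.univ.filter (fun j => E i j), m i j with hC
  -- η i ≤ C i
  have hηleC : ∀ i : Fin I, (η i : ℤ) ≤ C i := by
    intro i
    set shat : ∀ i', S i' := fun i' =>
      if h : ∃ j, E i j ∧ E i' j ∧ i' ≠ i then sstar (Classical.choose h) i' else s0 i'
      with hshat
    have hkey : ∀ j, E i j → ∀ i', E i' j → i' ≠ i → g i' j (shat i') - m i' j = 0 := by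
      intro j hij i' hi'j hne
      have hex : ∃ j0, E i j0 ∧ E i' j0 ∧ i' ≠ i := ⟨j, hij, hi'j, hne⟩
      have hsh : shat i' = sstar (Classical.choose hex) i' := by
        rw [hshat]
        exact dif_pos hex
      obtain ⟨h1, h2, _⟩ := Classical.choose_spec hex
      have hj0 : Classical.choose hex = j := by
        by_contra hne2
        exact hNDCS ⟨i, i', Classical.choose hex, j, Ne.symm hne, hne2, h1, hij, h2, hi'j⟩
      rw [hsh, hj0]
      simp only [hm]
      exact sub_self _
    have hstep : ∀ j, E i j → (n j shat : ℤ) = g i j (shat i) - m i j := by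
      intro j hij
      have himem : i ∈ Finset.univ.filter (fun i => E i j) :=
        Finset.mem_filter.mpr ⟨Finset.mem_univ _, hij⟩
      have hz : ∑ i' ∈ (Finset.univ.filter (fun i => E i j)).erase i,
          (g i' j (shat i') - m i' j) = 0 := by
        refine Finset.sum_eq_zero (fun i' hi' => ?_)
        obtain ⟨hne, hmem⟩ := Finset.mem_erase.mp hi'
        exact hkey j hij i' (Finset.mem_filter.mp hmem).2 hne
      have hsplit : ∑ i' ∈ Finset.univ.filter (fun i => E i j), (g i' j (shat i') - m i' j)
          = (g i j (shat i) - m i j)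
            + ∑ i' ∈ (Finset.univ.filter (fun i => E i j)).erase i,
              (g i' j (shat i') - m i' j) :=
        (Finset.add_sum_erase _ (fun i' => g i' j (shat i') - m i' j) himem).symm
      rw [hn_eq j shat, hsplit, hz, add_zero]
    have h1 : ((∑ j ∈ Finset.univ.filter (fun j => E i j), n j shat : ℕ) : ℤ) = C i := by
      rw [Nat.cast_sum]
      rw [Finset.sum_congr rfl (fun j hj => hstep j (Finset.mem_filter.mp hj).2)]
      rw [Finset.sum_sub_distrib, hsumg0 i (shat i), zero_sub]
    have h2 := hη i shat
    calc (η i : ℤ) ≤ ((∑ j ∈ Finset.univ.filter (fun j => E i j), n j shat : ℕ) : ℤ) := by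
          exact_mod_cast h2
      _ = C i := h1
  -- total of C equals total of η
  have hCsum : ∑ i, C i = ∑ i, (η i : ℤ) := by
    simp only [hC]
    have hswap : ∑ i, ∑ j ∈ Finset.univ.filter (fun j => E i j), m i j
        = ∑ j, ∑ i ∈ Finset.univ.filter (fun i => E i j), m i j := by
      simp_rw [Finset.sum_filter]
      exact Finset.sum_comm
    rw [Finset.sum_neg_distrib, hswap]
    have h : ∑ j, ∑ i ∈ Finset.univ.filter (fun i => E i j), m i j
        = -∑ j, (n j s0 : ℤ) := by
      rw [← Finset.sum_neg_distrib]
      refine Finset.sum_congr rfl (fun j _ => ?_)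
      have := hmsum j
      linarith
    rw [h, neg_neg, ← Nat.cast_sum, hsum s0, Nat.cast_sum]
  have hCeq : ∀ i : Fin I, C i = (η i : ℤ) := by
    have hz : ∑ i, (C i - (η i : ℤ)) = 0 := by
      rw [Finset.sum_sub_distrib, hCsum, sub_self]
    have hnn : ∀ i ∈ Finset.univ, (0 : ℤ) ≤ C i - η i := fun i _ => by linarith [hηleC i]
    intro i
    have := (Finset.sum_eq_zero_iff_of_nonneg hnn).mp hz i (Finset.mem_univ i)
    linarith
  -- conclusion
  refine ⟨fun i j si => (g i j si - m i j).toNat, ?_, ?_⟩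
  · intro i si
    have h : ((∑ j ∈ Finset.univ.filter (fun j => E i j), (g i j si - m i j).toNat : ℕ) : ℤ)
        = (η i : ℤ) := by
      rw [Nat.cast_sum]
      rw [Finset.sum_congr rfl
        (fun j hj => Int.toNat_of_nonneg (hTznn i j (Finset.mem_filter.mp hj).2 si))]
      rw [Finset.sum_sub_distrib, hsumg0 i si, zero_sub, ← hCeq i]
    exact_mod_cast h
  · intro j s
    have h : ((∑ i ∈ Finset.univ.filter (fun i => E i j), (g i j (s i) - m i j).toNat : ℕ) : ℤ)
        = (n j s : ℤ) := by
      rw [Nat.cast_sum]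
      rw [Finset.sum_congr rfl
        (fun i hi => Int.toNat_of_nonneg (hTznn i j (Finset.mem_filter.mp hi).2 (s i)))]
      rw [← hn_eq]
    exact_mod_cast h.symm
end

section
/- At most one color per source value: In the setting of color-matching rigidity (ECS network, indicator functions φ_i^(c) with g_j^(c) = ∏_{i:i→j} φ_i^(c), and the distribution has the property that no two parties sharing a source ever simultaneously output color matches with different colors, while Pr(A_j outputs c) > 0 for all j, c), one has ∑_c φ_i^(c)(s_i) ≤ 1 for every source S_i and value s_i. -/
open Finset

theorem CM_at_most_one_color
    {I J C : ℕ}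
    (S : Fin I → Type*) [∀ i, Nonempty (S i)]
    (E : Fin I → Fin J → Prop) [∀ i j, Decidable (E i j)]
    -- ECS: every source is the exclusive common source of two parties connected to it
    (hECS : ∀ i, ∃ j j' : Fin J, j ≠ j' ∧ E i j ∧ E i j' ∧
      ∀ i', E i' j → E i' j' → i' = i)
    (φ : (i : Fin I) → Fin C → S i → ℝ)
    (hφ : ∀ i c s, φ i c s = 0 ∨ φ i c s = 1)
    (g : Fin J → Fin C → (∀ i, S i) → ℝ)
    -- g_j^(c) = ∏_{i: i→j} φ_i^(c)
    (hg : ∀ j c (s : ∀ i, S i),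
      g j c s = ∏ i ∈ univ.filter (fun i => E i j), φ i c (s i))
    -- Pr(A_j outputs color match c) > 0 for all j, c
    (hpos : ∀ j c, ∃ s : ∀ i, S i, g j c s = 1)
    -- parties sharing a source never output color matches with different colors
    (hnodiff : ∀ (s : ∀ i, S i) (j j' : Fin J) (c c' : Fin C),
      (∃ i, E i j ∧ E i j') → g j c s = 1 → g j' c' s = 1 → c = c') :
    ∀ i (s : S i), ∑ c, φ i c s ≤ 1 := by
  intro i s
  -- factorization: g = 1 implies each factor is 1
  have factor : ∀ j c (t : ∀ i, S i), g j c t = 1 →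
      ∀ i', E i' j → φ i' c (t i') = 1 := by
    intro j c t ht i' hE
    rcases hφ i' c (t i') with h0 | h1
    · exfalso
      rw [hg] at ht
      have : (∏ k ∈ univ.filter (fun k => E k j), φ k c (t k)) = 0 :=
        Finset.prod_eq_zero (by simp [hE]) h0
      rw [this] at ht
      exact zero_ne_one ht
    · exact h1
  -- key: at most one color with φ i c s = 1
  have key : ∀ c c' : Fin C, φ i c s = 1 → φ i c' s = 1 → c = c' := by
    intro c c' hc hc'
    obtain ⟨j, j', hjj, hEj, hEj', hexcl⟩ := hECS i
    obtain ⟨s₀, h0⟩ := hpos j c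
    obtain ⟨s₁, h1⟩ := hpos j' c'
    set t : ∀ i', S i' := fun i' =>
      if h : i' = i then h.symm ▸ s else if E i' j then s₀ i' else s₁ i' with ht
    have hti : t i = s := by simp [ht]
    have gj : g j c t = 1 := by
      rw [hg]
      apply Finset.prod_eq_one
      intro k hk
      simp only [mem_filter, mem_univ, true_and] at hk
      by_cases hki : k = i
      · subst hki; rw [hti]; exact hc
      · have : t k = s₀ k := by simp [ht, hki, hk]
        rw [this]; exact factor j c s₀ h0 k hk
    have gj' : g j' c' t = 1 := by
      rw [hg]
      apply Finset.prod_eq_one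
      intro k hk
      simp only [mem_filter, mem_univ, true_and] at hk
      by_cases hki : k = i
      · subst hki; rw [hti]; exact hc'
      · have hkj : ¬ E k j := fun hkj => hki (hexcl k hkj hk)
        have : t k = s₁ k := by simp [ht, hki, hkj]
        rw [this]; exact factor j' c' s₁ h1 k hk
    exact hnodiff t j j' c c' ⟨i, hEj, hEj'⟩ gj gj'
  -- sum of 0/1 values with at most one 1
  have hsum : ∑ c, φ i c s = ((univ.filter (fun c => φ i c s = 1)).card : ℝ) := by
    rw [Finset.card_filter]
    push_cast
    apply Finset.sum_congr rfl
    intro c _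
    rcases hφ i c s with h | h <;> simp [h]
  rw [hsum]
  have : (univ.filter (fun c => φ i c s = 1)).card ≤ 1 := by
    apply Finset.card_le_one.mpr
    intro a ha b hb
    simp only [mem_filter, mem_univ, true_and] at ha hb
    exact key a b ha hb
  exact_mod_cast this
end

section
/- Graph-coloring constraint for the complete-graph CM network: Let n ≥ 5 and assign to each source S_i (i ∈ {1,...,n}) a color c_i ∈ {1,...,n}. Suppose that all n colors appear among c_1,...,c_n (no two sources sharing a party have equal colors, i.e., all c_i are distinct), and that for every pair i < j, c_i + c_j ∈ {i + j, 2(n+1) - (i+j)}. Then either c_i = i for all i, or c_i = n + 1 - i for all i. -/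
theorem complete_graph_CM_coloring (n : ℕ) (hn : 5 ≤ n) (c : ℕ → ℕ)
    (hrange : ∀ i, 1 ≤ i → i ≤ n → 1 ≤ c i ∧ c i ≤ n)
    (hinj : ∀ i j, 1 ≤ i → i ≤ n → 1 ≤ j → j ≤ n → c i = c j → i = j)
    (hpair : ∀ i j, 1 ≤ i → i < j → j ≤ n →
      c i + c j = i + j ∨ c i + c j = 2 * (n + 1) - (i + j)) :
    (∀ i, 1 ≤ i → i ≤ n → c i = i) ∨ (∀ i, 1 ≤ i → i ≤ n → c i = n + 1 - i) := by
  have h1 : c 1 = 1 ∨ c 1 = n := by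
    by_contra h
    push_neg at h
    obtain ⟨ha1, han⟩ := h
    have hr1 := hrange 1 (by omega) (by omega)
    have hr2 := hrange 2 (by omega) (by omega)
    have hr3 := hrange 3 (by omega) (by omega)
    have h12 := hpair 1 2 (by omega) (by omega) (by omega)
    have h13 := hpair 1 3 (by omega) (by omega) (by omega)
    have hinj13 : c 1 = c 3 → (1 : ℕ) = 3 :=
      hinj 1 3 (by omega) (by omega) (by omega) (by omega)
    rcases h12 with h12 | h12
    · rcases h13 with h13 | h13
      · have := hinj13 (by omega); omega
      · omega
    · rcases h13 with h13 | h13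
      · omega
      · have := hinj13 (by omega); omega
  rcases h1 with h1 | h1
  · left
    intro i h1i hin
    rcases eq_or_lt_of_le h1i with h | h
    · subst h; omega
    · have hr := hrange i h1i hin
      have hp := hpair 1 i (by omega) h hin
      omega
  · right
    intro i h1i hin
    rcases eq_or_lt_of_le h1i with h | h
    · subst h; omega
    · have hr := hrange i h1i hin
      have hp := hpair 1 i (by omega) h hin
      omega
end
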